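/- arXiv:1203.1943 — 5 statements merged into one kernel-verified Lean document; each statement's English description precedes it below -/
import Mathlib

section
/- Let Q be a finite acyclic quiver, t ∈ V, and v, w lists over V. In HK(Q) the following identities hold: (i) if there is no arrow from t to any vertex in {w} ∪ {t} (t is a sink in the full subquiver on {t} ∪ {w}), then x_t·X_w·x_t = X_w·x_t; (ii) if there is no arrow from any vertex in {w} ∪ {t} to t (t is a source in the full subquiver on {t} ∪ {w}), then x_t·X_w·x_t = x_t·X_w; (iii) if for all p ∈ {v} and q ∈ {w} neither arr p q nor arr q p holds, then X_v·X_w = X_w·X_v. -/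
/-- The defining relations of the Hecke–Kiselman monoid of a quiver with
vertex type `V` and arrow relation `arr`. -/
inductive HKRel {V : Type} (arr : V → V → Prop) : FreeMonoid V → FreeMonoid V → Prop
  | idem (t : V) :
      HKRel arr (FreeMonoid.of t * FreeMonoid.of t) (FreeMonoid.of t)
  | braid (s t : V) :
      HKRel arr (FreeMonoid.of s * FreeMonoid.of t * FreeMonoid.of s)
        (FreeMonoid.of t * FreeMonoid.of s * FreeMonoid.of t)
  | absorb (s t : V) : ¬ arr t s →
      HKRel arr (FreeMonoid.of t * FreeMonoid.of s * FreeMonoid.of t)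
        (FreeMonoid.of s * FreeMonoid.of t)

/-- The congruence on the free monoid generated by the Hecke–Kiselman relations. -/
def HKCon {V : Type} (arr : V → V → Prop) : Con (FreeMonoid V) := conGen (HKRel arr)

/-- The Hecke–Kiselman monoid of the quiver `(V, arr)`. -/
abbrev HK {V : Type} (arr : V → V → Prop) : Type := (HKCon arr).Quotient

/-- The generator of the Hecke–Kiselman monoid attached to the vertex `t`. -/
def HK.x {V : Type} (arr : V → V → Prop) (t : V) : HK arr :=
  (HKCon arr).mk' (FreeMonoid.of t)

/-- The quiver `(V, arr)` is acyclic: the transitive closure of `arr` is irreflexive. -/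
def IsAcyclicQuiver {V : Type} (arr : V → V → Prop) : Prop :=
  ∀ v : V, ¬ Relation.TransGen arr v v

/-- The monomial `X_w` in the Hecke–Kiselman monoid attached to a word (list) `w` over `V`. -/
def HK.X {V : Type} (arr : V → V → Prop) (w : List V) : HK arr :=
  (w.map (HK.x arr)).prod


namespace HKAux

variable {V : Type} {arr : V → V → Prop}

lemma of_rel {a b : FreeMonoid V} (h : HKRel arr a b) :
    (HKCon arr).mk' a = (HKCon arr).mk' b :=
  (Con.eq _).2 (ConGen.Rel.of _ _ h)

lemma x_idem (t : V) : HK.x arr t * HK.x arr t = HK.x arr t := by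
  simpa [HK.x, map_mul] using of_rel (HKRel.idem (arr := arr) t)

lemma x_braid (s t : V) :
    HK.x arr s * HK.x arr t * HK.x arr s = HK.x arr t * HK.x arr s * HK.x arr t := by
  simpa [HK.x, map_mul] using of_rel (HKRel.braid (arr := arr) s t)

lemma x_absorb (s t : V) (h : ¬ arr t s) :
    HK.x arr t * HK.x arr s * HK.x arr t = HK.x arr s * HK.x arr t := by
  simpa [HK.x, map_mul] using of_rel (HKRel.absorb (arr := arr) s t h)

lemma x_absorb' (s t : V) (h : ¬ arr s t) :
    HK.x arr t * HK.x arr s * HK.x arr t = HK.x arr t * HK.x arr s := by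
  rw [x_braid t s, x_absorb t s h]

lemma x_comm (p q : V) (h1 : ¬ arr p q) (h2 : ¬ arr q p) :
    HK.x arr p * HK.x arr q = HK.x arr q * HK.x arr p := by
  rw [← x_absorb p q h2, x_braid q p, x_absorb q p h1]

lemma X_nil : HK.X arr ([] : List V) = 1 := rfl

lemma X_cons (a : V) (w : List V) :
    HK.X arr (a :: w) = HK.x arr a * HK.X arr w := by
  simp [HK.X]

lemma X_append (u w : List V) :
    HK.X arr (u ++ w) = HK.X arr u * HK.X arr w := by
  simp [HK.X]

lemma sink (t : V) (w : List V) (h : ∀ q ∈ w, ¬ arr t q) (ht : ¬ arr t t) :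
    HK.x arr t * HK.X arr w * HK.x arr t = HK.X arr w * HK.x arr t := by
  induction w with
  | nil => simpa [X_nil] using x_idem (arr := arr) t
  | cons a w ih =>
    have ha : ¬ arr t a := h a (List.mem_cons_self (a := a) (l := w))
    have ih' := ih (fun q hq => h q (List.mem_cons_of_mem a hq))
    rw [X_cons]
    calc HK.x arr t * (HK.x arr a * HK.X arr w) * HK.x arr t
        = HK.x arr t * HK.x arr a * (HK.X arr w * HK.x arr t) := by
          rw [mul_assoc, mul_assoc, mul_assoc]
      _ = HK.x arr t * HK.x arr a * (HK.x arr t * HK.X arr w * HK.x arr t) := by rw [ih']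
      _ = HK.x arr t * HK.x arr a * HK.x arr t * (HK.X arr w * HK.x arr t) := by
          simp only [mul_assoc]
      _ = HK.x arr a * HK.x arr t * (HK.X arr w * HK.x arr t) := by rw [x_absorb a t ha]
      _ = HK.x arr a * (HK.x arr t * HK.X arr w * HK.x arr t) := by
          rw [mul_assoc, mul_assoc]
      _ = HK.x arr a * (HK.X arr w * HK.x arr t) := by rw [ih']
      _ = HK.x arr a * HK.X arr w * HK.x arr t := by rw [mul_assoc]

lemma source (t : V) (w : List V) (h : ∀ q ∈ w, ¬ arr q t) (ht : ¬ arr t t) :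
    HK.x arr t * HK.X arr w * HK.x arr t = HK.x arr t * HK.X arr w := by
  induction w using List.reverseRecOn with
  | nil => simpa [X_nil] using x_idem (arr := arr) t
  | append_singleton w a ih =>
    have ha : ¬ arr a t := h a (by simp)
    have ih' := ih (fun q hq => h q (by simp [hq]))
    rw [X_append, X_cons, X_nil, mul_one]
    calc HK.x arr t * (HK.X arr w * HK.x arr a) * HK.x arr t
        = HK.x arr t * HK.X arr w * (HK.x arr a * HK.x arr t) := by
          rw [mul_assoc, mul_assoc, mul_assoc]
      _ = HK.x arr t * HK.X arr w * HK.x arr t * (HK.x arr a * HK.x arr t) := by rw [ih']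
      _ = HK.x arr t * HK.X arr w * (HK.x arr t * HK.x arr a * HK.x arr t) := by
          simp only [mul_assoc]
      _ = HK.x arr t * HK.X arr w * (HK.x arr t * HK.x arr a) := by rw [x_absorb' a t ha]
      _ = HK.x arr t * HK.X arr w * HK.x arr t * HK.x arr a := by
          simp only [mul_assoc]
      _ = HK.x arr t * HK.X arr w * HK.x arr a := by rw [ih']
      _ = HK.x arr t * (HK.X arr w * HK.x arr a) := by rw [mul_assoc]

lemma x_comm_X (p : V) (w : List V) (h : ∀ q ∈ w, ¬ arr p q ∧ ¬ arr q p) :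
    HK.x arr p * HK.X arr w = HK.X arr w * HK.x arr p := by
  induction w with
  | nil => simp [X_nil]
  | cons a w ih =>
    have ha := h a (List.mem_cons_self (a := a) (l := w))
    have ih' := ih (fun q hq => h q (List.mem_cons_of_mem a hq))
    rw [X_cons, ← mul_assoc, x_comm p a ha.1 ha.2, mul_assoc, ih', mul_assoc]

lemma X_comm_X (v w : List V) (h : ∀ p ∈ v, ∀ q ∈ w, ¬ arr p q ∧ ¬ arr q p) :
    HK.X arr v * HK.X arr w = HK.X arr w * HK.X arr v := by
  induction v with
  | nil => simp [X_nil]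
  | cons a v ih =>
    have ha := h a (List.mem_cons_self (a := a) (l := v))
    have ih' := ih (fun p hp => h p (List.mem_cons_of_mem a hp))
    rw [X_cons, mul_assoc, ih', ← mul_assoc, x_comm_X a w ha, mul_assoc]

end HKAux

/-- Generalized relations in the Hecke–Kiselman monoid of a finite
acyclic quiver: (i) if `t` is a sink in the full subquiver on `{t} ∪ {w}`, then
`x_t · X_w · x_t = X_w · x_t`; (ii) if `t` is a source in the full subquiver on
`{t} ∪ {w}`, then `x_t · X_w · x_t = x_t · X_w`; (iii) if there is no arrow between
the subquivers on `{v}` and `{w}`, then `X_v · X_w = X_w · X_v`. -/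
theorem hk_generalized_relations (V : Type) [Fintype V] (arr : V → V → Prop)
    (hQ : IsAcyclicQuiver arr) (t : V) (v w : List V) :
    ((∀ q ∈ t :: w, ¬ arr t q) →
      HK.x arr t * HK.X arr w * HK.x arr t = HK.X arr w * HK.x arr t) ∧
    ((∀ q ∈ t :: w, ¬ arr q t) →
      HK.x arr t * HK.X arr w * HK.x arr t = HK.x arr t * HK.X arr w) ∧
    ((∀ p ∈ v, ∀ q ∈ w, ¬ arr p q ∧ ¬ arr q p) →
      HK.X arr v * HK.X arr w = HK.X arr w * HK.X arr v) := by
  refine ⟨fun h => HKAux.sink t w (fun q hq => h q (List.mem_cons_of_mem t hq))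
      (h t (List.mem_cons_self (a := t) (l := w))),
    fun h => HKAux.source t w (fun q hq => h q (List.mem_cons_of_mem t hq))
      (h t (List.mem_cons_self (a := t) (l := w))),
    fun h => HKAux.X_comm_X v w h⟩
end

section
/- For every finite acyclic quiver Q, the Hecke–Kiselman monoid HK(Q) is finite. -/
/-! ### Auxiliary lemmas -/

open FreeMonoid

section Aux

variable {V : Type} {arr : V → V → Prop}

private lemma hk_eq {a b a' b' : FreeMonoid V} (ha : a = a') (hb : b = b')
    (h : HKCon arr a b) : HKCon arr a' b' := ha ▸ hb ▸ h

private lemma hk_r1 (v s : V) (h : ¬ arr v s) :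
    HKCon arr (of v * of s * of v) (of s * of v) :=
  ConGen.Rel.of _ _ (HKRel.absorb s v h)

private lemma hk_idem (v : V) : HKCon arr (of v * of v) (of v) :=
  ConGen.Rel.of _ _ (HKRel.idem v)

private lemma hk_app_left (A : List V) {w w' : List V}
    (h : HKCon arr (ofList w) (ofList w')) :
    HKCon arr (ofList (A ++ w)) (ofList (A ++ w')) := by
  refine hk_eq (ofList_append A w).symm (ofList_append A w').symm ?_
  exact (HKCon arr).mul ((HKCon arr).refl (ofList A)) h

private lemma hk_app_right (Z : List V) {w w' : List V}
    (h : HKCon arr (ofList w) (ofList w')) :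
    HKCon arr (ofList (w ++ Z)) (ofList (w' ++ Z)) := by
  refine hk_eq (ofList_append w Z).symm (ofList_append w' Z).symm ?_
  exact (HKCon arr).mul h ((HKCon arr).refl (ofList Z))

/-- If `v` has no arrow towards any letter of `Y`, then `v ⬝ Y ⬝ v = Y ⬝ v`
in the Hecke–Kiselman monoid. -/
private lemma hk_sandwich (v : V) (Y : List V) (h : ∀ s ∈ Y, ¬ arr v s) :
    HKCon arr (ofList (v :: (Y ++ [v]))) (ofList (Y ++ [v])) := by
  induction Y using List.reverseRecOn with
  | nil => exact hk_idem v
  | append_singleton Y s ih =>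
      have hs : ¬ arr v s := h s (by simp)
      have h1 : HKCon arr (ofList [s, v]) (ofList [v, s, v]) :=
        ((hk_r1 v s hs) : HKCon arr (of v * of s * of v) (of s * of v)).symm
      have step1 : HKCon arr (ofList ((v :: Y) ++ [s, v])) (ofList ((v :: Y) ++ [v, s, v])) :=
        hk_app_left _ h1
      have step2 : HKCon arr (ofList ((v :: (Y ++ [v])) ++ [s, v]))
          (ofList ((Y ++ [v]) ++ [s, v])) :=
        hk_app_right _ (ih (fun s hs' => h s (by simp [hs'])))
      have step3 : HKCon arr (ofList (Y ++ [v, s, v])) (ofList (Y ++ [s, v])) :=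
        hk_app_left Y (hk_r1 v s hs)
      have e1 : ((v :: Y) ++ [v, s, v] : List V) = (v :: (Y ++ [v])) ++ [s, v] := by simp
      have e2 : ((Y ++ [v]) ++ [s, v] : List V) = Y ++ [v, s, v] := by simp
      have := (step1.trans (hk_eq (congrArg ofList e1.symm) rfl step2)).trans
        (hk_eq (congrArg ofList e2.symm) rfl step3)
      refine hk_eq (congrArg ofList ?_) (congrArg ofList ?_) this <;> simp

/-- Extraction: if `v` has no arrows to any letter of `w`, then `w` is congruent
to a word `A ++ Z` or `A ++ v :: Z` where `A`, `Z` are `v`-free words with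
letters taken from `w`. -/
private lemma hk_extract (v : V) :
    ∀ w : List V, (∀ x ∈ w, ¬ arr v x) →
      ∃ A Z : List V, v ∉ A ∧ v ∉ Z ∧ (∀ x ∈ A, x ∈ w) ∧ (∀ x ∈ Z, x ∈ w) ∧
        (HKCon arr (ofList w) (ofList (A ++ Z)) ∨
         HKCon arr (ofList w) (ofList (A ++ v :: Z))) := by
  intro w
  induction w with
  | nil =>
      intro _
      exact ⟨[], [], by simp, by simp, by simp, by simp,
        Or.inl ((HKCon arr).refl _)⟩
  | cons s w0 ih =>
      intro hw
      obtain ⟨A, Z, hvA, hvZ, hAw, hZw, hc⟩ := ih (fun x hx => hw x (by simp [hx]))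
      by_cases hs : s = v
      · subst hs
        rcases hc with hc | hc
        · refine ⟨[], A ++ Z, by simp, ?_, by simp, ?_, Or.inr ?_⟩
          · simp [hvA, hvZ]
          · intro x hx; simp only [List.mem_append] at hx
            rcases hx with hx | hx
            · exact List.mem_cons_of_mem _ (hAw x hx)
            · exact List.mem_cons_of_mem _ (hZw x hx)
          · exact hk_app_left [s] hc
        · have h1 : HKCon arr (ofList (s :: w0)) (ofList (s :: (A ++ s :: Z))) :=
            hk_app_left [s] hc
          have h2 : HKCon arr (ofList (s :: (A ++ [s]))) (ofList (A ++ [s])) :=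
            hk_sandwich s A (fun x hx => hw x (by simp [hAw x hx]))
          have h3 : HKCon arr (ofList ((s :: (A ++ [s])) ++ Z)) (ofList ((A ++ [s]) ++ Z)) :=
            hk_app_right Z h2
          have e1 : (s :: (A ++ s :: Z) : List V) = (s :: (A ++ [s])) ++ Z := by simp
          have e2 : ((A ++ [s]) ++ Z : List V) = A ++ s :: Z := by simp
          refine ⟨A, Z, hvA, hvZ,
            fun x hx => List.mem_cons_of_mem _ (hAw x hx),
            fun x hx => List.mem_cons_of_mem _ (hZw x hx), Or.inr ?_⟩
          exact (h1.trans (hk_eq (congrArg ofList e1.symm) (congrArg ofList e2) h3))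
      · rcases hc with hc | hc
        · exact ⟨s :: A, Z, by simp [hvA, Ne.symm hs], hvZ,
            by intro x hx; rcases List.mem_cons.mp hx with h | h
               · simp [h]
               · exact List.mem_cons_of_mem _ (hAw x h),
            fun x hx => List.mem_cons_of_mem _ (hZw x hx),
            Or.inl (hk_app_left [s] hc)⟩
        · exact ⟨s :: A, Z, by simp [hvA, Ne.symm hs], hvZ,
            by intro x hx; rcases List.mem_cons.mp hx with h | h
               · simp [h]
               · exact List.mem_cons_of_mem _ (hAw x h),
            fun x hx => List.mem_cons_of_mem _ (hZw x hx),
            Or.inr (hk_app_left [s] hc)⟩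

/-- Every nonempty finite set of an acyclic quiver contains a "sink" relative to
the transitive closure of the arrow relation. -/
private lemma exists_sink [DecidableEq V] (hQ : IsAcyclicQuiver arr) :
    ∀ S : Finset V, S.Nonempty → ∃ v ∈ S, ∀ s ∈ S, ¬ Relation.TransGen arr v s := by
  intro S
  induction S using Finset.strongInduction with
  | _ S ih =>
      intro hne
      obtain ⟨a, ha⟩ := hne
      by_cases h : ∀ s ∈ S, ¬ Relation.TransGen arr a s
      · exact ⟨a, ha, h⟩
      · push_neg at h
        obtain ⟨b, hb, hab⟩ := h
        have hba : b ≠ a := fun h => hQ a (h ▸ hab)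
        have hsub : S.erase a ⊂ S := Finset.erase_ssubset ha
        obtain ⟨v, hv, hvmax⟩ := ih _ hsub ⟨b, Finset.mem_erase.mpr ⟨hba, hb⟩⟩
        refine ⟨v, Finset.mem_of_mem_erase hv, fun s hs hvs => ?_⟩
        by_cases hsa : s = a
        · subst hsa
          exact hvmax b (Finset.mem_erase.mpr ⟨hba, hb⟩) (hvs.trans hab)
        · exact hvmax s (Finset.mem_erase.mpr ⟨hsa, hs⟩) hvs

/-- Every word with letters in `S` is congruent to a word of length at most
`2 ^ S.card - 1`. -/
private lemma bounded_rep [DecidableEq V] (hQ : IsAcyclicQuiver arr) :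
    ∀ S : Finset V, ∀ w : List V, (∀ x ∈ w, x ∈ S) →
      ∃ w' : List V, w'.length ≤ 2 ^ S.card - 1 ∧ HKCon arr (ofList w) (ofList w') := by
  intro S
  induction S using Finset.strongInduction with
  | _ S ih =>
      intro w hw
      rcases S.eq_empty_or_nonempty with rfl | hS
      · have : w = [] := by
          cases w with
          | nil => rfl
          | cons a l => exact absurd (hw a (by simp)) (by simp)
        subst this
        exact ⟨[], by simp, (HKCon arr).refl _⟩
      · obtain ⟨v, hvS, hv⟩ := exists_sink hQ S hS
        have hvarr : ∀ x ∈ w, ¬ arr v x :=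
          fun x hx h => hv x (hw x hx) (Relation.TransGen.single h)
        obtain ⟨A, Z, hvA, hvZ, hAw, hZw, hc⟩ := hk_extract v w hvarr
        have hsub : S.erase v ⊂ S := Finset.erase_ssubset hvS
        have hA : ∀ x ∈ A, x ∈ S.erase v := fun x hx =>
          Finset.mem_erase.mpr ⟨fun h => hvA (h ▸ hx), hw x (hAw x hx)⟩
        have hZ : ∀ x ∈ Z, x ∈ S.erase v := fun x hx =>
          Finset.mem_erase.mpr ⟨fun h => hvZ (h ▸ hx), hw x (hZw x hx)⟩
        obtain ⟨A', hA'len, hA'c⟩ := ih _ hsub A hA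
        obtain ⟨Z', hZ'len, hZ'c⟩ := ih _ hsub Z hZ
        have hcard : (S.erase v).card = S.card - 1 := Finset.card_erase_of_mem hvS
        have hScard : 1 ≤ S.card := Finset.card_pos.mpr hS
        have hlen : 2 * (2 ^ (S.card - 1) - 1) + 1 ≤ 2 ^ S.card - 1 := by
          have : 2 ^ S.card = 2 * 2 ^ (S.card - 1) := by
            rw [← pow_succ']
            congr 1
            omega
          have h2 : 1 ≤ 2 ^ (S.card - 1) := Nat.one_le_two_pow
          omega
        rw [hcard] at hA'len hZ'len
        rcases hc with hc | hc
        · refine ⟨A' ++ Z', ?_, ?_⟩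
          · simp only [List.length_append]; omega
          · refine hc.trans ?_
            exact (hk_app_right Z hA'c).trans (hk_app_left A' hZ'c)
        · refine ⟨A' ++ v :: Z', ?_, ?_⟩
          · simp only [List.length_append, List.length_cons]; omega
          · refine hc.trans ?_
            have s1 : HKCon arr (ofList (A ++ v :: Z)) (ofList (A' ++ v :: Z)) :=
              hk_app_right (v :: Z) hA'c
            have s2 : HKCon arr (ofList (A' ++ v :: Z)) (ofList (A' ++ v :: Z')) := by
              have := hk_app_left (A' ++ [v]) hZ'c
              refine hk_eq (congrArg ofList ?_) (congrArg ofList ?_) this <;> simp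
            exact s1.trans s2

end Aux

/-- For every finite acyclic quiver `Q`, the Hecke–Kiselman
monoid `HK(Q)` is finite. -/
theorem hk_finite (V : Type) [Fintype V] (arr : V → V → Prop)
    (hQ : IsAcyclicQuiver arr) : Finite (HK arr) := by
  classical
  set N := 2 ^ Fintype.card V - 1 with hN
  have hfin : {l : List V | l.length ≤ N}.Finite := List.finite_length_le V N
  haveI : Finite {l : List V // l.length ≤ N} := hfin.to_subtype
  refine Finite.of_surjective
    (fun l : {l : List V // l.length ≤ N} => (HKCon arr).mk' (ofList l.1)) ?_
  intro x
  obtain ⟨w, rfl⟩ := Con.mk'_surjective x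
  obtain ⟨w', hlen, hc⟩ := bounded_rep hQ Finset.univ (toList w) (by simp)
  rw [Finset.card_univ] at hlen
  refine ⟨⟨w', hlen⟩, ?_⟩
  exact ((HKCon arr).eq).mpr hc.symm
end

section
/- Let Q be a finite acyclic quiver with vertex set V and let K be the full subquiver of Q on a subset W ⊆ V (i.e. K has vertex set W and arrow relation arr restricted to W). Then the monoid homomorphism HK(K) → HK(Q) sending the generator x_t of HK(K) to the generator x_t of HK(Q) for each t ∈ W is injective; consequently, for any field k, the induced map of monoid algebras realizes MonoidAlgebra k HK(K) as a subalgebra of MonoidAlgebra k HK(Q). -/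
lemma HK.rel {V : Type} {arr : V → V → Prop} {a b : FreeMonoid V} (h : HKRel arr a b) :
    (HKCon arr).mk' a = (HKCon arr).mk' b :=
  ((HKCon arr).eq).2 (ConGen.Rel.of _ _ h)

lemma HK.x_idem {V : Type} (arr : V → V → Prop) (t : V) :
    HK.x arr t * HK.x arr t = HK.x arr t := by
  simpa [HK.x, ← map_mul] using HK.rel (HKRel.idem (arr := arr) t)

lemma HK.x_braid {V : Type} (arr : V → V → Prop) (s t : V) :
    HK.x arr s * HK.x arr t * HK.x arr s = HK.x arr t * HK.x arr s * HK.x arr t := by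
  simpa [HK.x, ← map_mul] using HK.rel (HKRel.braid (arr := arr) s t)

lemma HK.x_absorb {V : Type} (arr : V → V → Prop) (s t : V) (h : ¬ arr t s) :
    HK.x arr t * HK.x arr s * HK.x arr t = HK.x arr s * HK.x arr t := by
  simpa [HK.x, ← map_mul] using HK.rel (HKRel.absorb (arr := arr) s t h)


/-- If `K` is the full subquiver of a finite acyclic quiver `Q` on a
subset `W` of the vertices, then the monoid homomorphism `HK(K) →* HK(Q)` sending
generators to generators is injective; consequently, for any field `k`, the induced
algebra homomorphism of monoid algebras is injective, realizing
`MonoidAlgebra k (HK K)` as a subalgebra of `MonoidAlgebra k (HK Q)`. -/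
theorem hk_full_subquiver_injective (V : Type) [Fintype V] (arr : V → V → Prop)
    (hQ : IsAcyclicQuiver arr) (W : Set V)
    (φ : HK (fun a b : W => arr a b) →* HK arr)
    (hφ : ∀ t : W, φ (HK.x (fun a b : W => arr a b) t) = HK.x arr (t : V)) :
    Function.Injective φ ∧
    ∀ (k : Type) [Field k],
      Function.Injective (MonoidAlgebra.mapDomainAlgHom k k φ) := by
  classical
  set f : FreeMonoid V →* HK (fun a b : W => arr a b) :=
    FreeMonoid.lift (fun t => if h : t ∈ W then HK.x (fun a b : W => arr a b) ⟨t, h⟩ else 1) with hf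
  have hfval : ∀ t : V, f (FreeMonoid.of t) =
      if h : t ∈ W then HK.x (fun a b : W => arr a b) ⟨t, h⟩ else 1 := by
    intro t; simp [hf]
  have hker : HKCon arr ≤ Con.ker f := by
    apply Con.conGen_le.2
    intro a b hab
    cases hab with
    | idem t =>
        show f _ = f _
        rw [map_mul, hfval]
        by_cases h : t ∈ W <;> simp [h, HK.x_idem]
    | braid s t =>
        show f _ = f _
        rw [map_mul, map_mul, map_mul, map_mul, hfval, hfval]
        by_cases hs : s ∈ W <;> by_cases ht : t ∈ W <;>
          simp only [hs, ht, dif_pos, dif_neg, not_false_iff, one_mul, mul_one]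
        · exact HK.x_braid _ _ _
        · exact HK.x_idem _ _
        · exact (HK.x_idem _ _).symm
    | absorb s t h =>
        show f _ = f _
        rw [map_mul, map_mul, map_mul, hfval, hfval]
        by_cases hs : s ∈ W <;> by_cases ht : t ∈ W <;>
          simp only [hs, ht, dif_pos, dif_neg, not_false_iff, one_mul, mul_one]
        · exact HK.x_absorb (fun a b : W => arr a b) ⟨s, hs⟩ ⟨t, ht⟩ h
        · exact HK.x_idem _ _
  set ψ : HK arr →* HK (fun a b : W => arr a b) := Con.lift _ f hker with hψ
  have hψmk : ∀ a : FreeMonoid V, ψ ((HKCon arr).mk' a) = f a := fun a => rfl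
  have key : ∀ w : FreeMonoid W,
      ψ (φ ((HKCon (fun a b : W => arr a b)).mk' w)) = (HKCon (fun a b : W => arr a b)).mk' w := by
    intro w
    induction w using FreeMonoid.inductionOn' with
    | one => simp
    | of_mul b xs ih =>
        rw [map_mul, map_mul, map_mul]
        have hb : ψ (φ ((HKCon (fun a b : W => arr a b)).mk' (FreeMonoid.of b)))
            = (HKCon (fun a b : W => arr a b)).mk' (FreeMonoid.of b) := by
          rw [show (HKCon (fun a b : W => arr a b)).mk' (FreeMonoid.of b)
              = HK.x (fun a b : W => arr a b) b from rfl, hφ]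
          rw [show ψ (HK.x arr ↑b) = f (FreeMonoid.of (↑b : V)) from rfl, hfval, dif_pos b.2]
        rw [hb, ih]
  have hleft : ∀ a, ψ (φ a) = a := by
    intro a
    induction a using Con.induction_on with
    | H w => exact key w
  have hinj : Function.Injective φ := Function.LeftInverse.injective hleft
  refine ⟨hinj, ?_⟩
  intro k _
  have : ∀ x : MonoidAlgebra k (HK (fun a b : W => arr a b)),
      (MonoidAlgebra.mapDomainAlgHom k k φ) x = MonoidAlgebra.mapDomain φ x := fun x => rfl
  intro x y hxy
  exact MonoidAlgebra.mapDomain_injective hinj (by simpa [this] using hxy)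
end

section
/- For every n ≥ 1, the cardinality of the Hecke–Kiselman monoid HK(Q_n) of the linearly oriented type-A quiver Q_n equals the (n+1)-st Catalan number C_{n+1} = (1/(n+2))·binom(2(n+1), n+1). -/
/-- The arrow relation of the linearly oriented type-`A` quiver `Q_n` with vertices
`1, …, n` (modelled as `Fin n`) and arrows `i → i+1`. -/
def arrQn (n : ℕ) : Fin n → Fin n → Prop := fun i j => (i : ℕ) + 1 = (j : ℕ)

namespace HKCat

variable (n : ℕ)

/-- truncated generators of `HK (arrQn n)` indexed by naturals. -/
def E (c : ℕ) : HK (arrQn n) := if h : c < n then HK.x (arrQn n) ⟨c, h⟩ else 1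

lemma mkrel {w₁ w₂ : FreeMonoid (Fin n)} (h : HKRel (arrQn n) w₁ w₂) :
    (HKCon (arrQn n)).mk' w₁ = (HKCon (arrQn n)).mk' w₂ :=
  (Con.eq _).mpr (ConGen.Rel.of _ _ h)

lemma x_idem (t : Fin n) : HK.x (arrQn n) t * HK.x (arrQn n) t = HK.x (arrQn n) t := by
  have := mkrel n (HKRel.idem (arr := arrQn n) t)
  rwa [map_mul] at this

lemma x_braid (s t : Fin n) :
    HK.x (arrQn n) s * HK.x (arrQn n) t * HK.x (arrQn n) s =
      HK.x (arrQn n) t * HK.x (arrQn n) s * HK.x (arrQn n) t := by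
  have := mkrel n (HKRel.braid (arr := arrQn n) s t)
  rwa [map_mul, map_mul, map_mul, map_mul] at this

lemma x_absorb (s t : Fin n) (h : ¬ arrQn n t s) :
    HK.x (arrQn n) t * HK.x (arrQn n) s * HK.x (arrQn n) t =
      HK.x (arrQn n) s * HK.x (arrQn n) t := by
  have := mkrel n (HKRel.absorb (arr := arrQn n) s t h)
  rwa [map_mul, map_mul, map_mul] at this

lemma E_idem (c : ℕ) : E n c * E n c = E n c := by
  by_cases h : c < n
  · simp only [E, dif_pos h]; exact x_idem n ⟨c, h⟩
  · simp [E, dif_neg h]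

lemma E_braid (c d : ℕ) : E n c * E n d * E n c = E n d * E n c * E n d := by
  by_cases hc : c < n <;> by_cases hd : d < n
  · simp only [E, dif_pos hc, dif_pos hd]; exact x_braid n ⟨c, hc⟩ ⟨d, hd⟩
  · simp only [E, dif_pos hc, dif_neg hd, mul_one, one_mul]; exact x_idem n ⟨c, hc⟩
  · simp only [E, dif_neg hc, dif_pos hd, mul_one, one_mul]; exact (x_idem n ⟨d, hd⟩).symm
  · simp [E, dif_neg hc, dif_neg hd]

lemma E_absorb (c d : ℕ) (h : d ≠ c + 1) : E n c * E n d * E n c = E n d * E n c := by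
  by_cases hc : c < n <;> by_cases hd : d < n
  · simp only [E, dif_pos hc, dif_pos hd]
    exact x_absorb n ⟨d, hd⟩ ⟨c, hc⟩ (by simpa [arrQn] using fun hh => h hh.symm)
  · simp only [E, dif_pos hc, dif_neg hd, mul_one, one_mul]; exact x_idem n ⟨c, hc⟩
  · simp [E, dif_neg hc, dif_pos hd]
  · simp [E, dif_neg hc, dif_neg hd]

lemma E_comm (c d : ℕ) (h : c + 2 ≤ d) : E n c * E n d = E n d * E n c := by
  have h1 : E n d * E n c * E n d = E n c * E n d := E_absorb n d c (by omega)
  have h2 : E n c * E n d * E n c = E n d * E n c := E_absorb n c d (by omega)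
  rw [← h1, ← E_braid n c d, h2]

lemma E_abs1 (c : ℕ) : E n c * E n (c + 1) * E n c = E n c * E n (c + 1) := by
  rw [E_braid]; exact E_absorb n (c + 1) c (by omega)

lemma E_abs2 (c : ℕ) : E n (c + 1) * E n c * E n (c + 1) = E n c * E n (c + 1) :=
  E_absorb n (c + 1) c (by omega)


/-- descending run of generators: `Rw b l = E (b+l-1) * ⋯ * E (b+1) * E b`. -/
def Rw : ℕ → ℕ → HK (arrQn n)
  | _, 0 => 1
  | b, l + 1 => Rw (b + 1) l * E n b

@[simp] lemma Rw_zero (b : ℕ) : Rw n b 0 = 1 := rfl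

lemma Rw_succ (b l : ℕ) : Rw n b (l + 1) = Rw n (b + 1) l * E n b := rfl

lemma Rw_top : ∀ l b, Rw n b (l + 1) = E n (b + l) * Rw n b l := by
  intro l
  induction l with
  | zero => intro b; simp [Rw_succ]
  | succ l ih =>
      intro b
      rw [Rw_succ, ih (b + 1), mul_assoc, ← Rw_succ]
      have : b + 1 + l = b + (l + 1) := by omega
      rw [this]

lemma ER_comm_high : ∀ l b, b + l + 1 ≤ c → E n c * Rw n b l = Rw n b l * E n c := by
  intro l
  induction l with
  | zero => intro b _; simp
  | succ l ih =>
      intro b h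
      rw [Rw_succ, ← mul_assoc, ih (b + 1) (by omega), mul_assoc, mul_assoc]
      congr 1
      exact (E_comm n b c (by omega)).symm

lemma ER_comm_low : ∀ l b, c + 2 ≤ b → E n c * Rw n b l = Rw n b l * E n c := by
  intro l
  induction l with
  | zero => intro b _; simp
  | succ l ih =>
      intro b h
      rw [Rw_succ, ← mul_assoc, ih (b + 1) (by omega), mul_assoc, mul_assoc]
      congr 1
      exact E_comm n c b (by omega)

lemma RR_comm : ∀ l b, b' + l' + 1 ≤ b → Rw n b l * Rw n b' l' = Rw n b' l' * Rw n b l := by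
  intro l
  induction l with
  | zero => intro b _; simp
  | succ l ih =>
      intro b h
      rw [Rw_succ, mul_assoc, ER_comm_high n l' b' (by omega), ← mul_assoc,
        ih (b + 1) (by omega), mul_assoc, ← Rw_succ]

lemma Rw_concat : ∀ l₁ l₂ b, Rw n b (l₁ + l₂) = Rw n (b + l₁) l₂ * Rw n b l₁ := by
  intro l₁
  induction l₁ with
  | zero => intro l₂ b; simp
  | succ l₁ ih =>
      intro l₂ b
      have e : l₁ + 1 + l₂ = (l₁ + l₂) + 1 := by omega
      rw [e, Rw_succ, ih l₂ (b + 1), mul_assoc, ← Rw_succ]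
      have e2 : b + 1 + l₁ = b + (l₁ + 1) := by omega
      rw [e2]

/-- the run `E a * E (a-1) * ⋯ * E b`. -/
def Run (a b : ℕ) : HK (arrQn n) := Rw n b (a + 1 - b)

lemma Run_single (a : ℕ) : Run n a a = E n a := by
  have h : a + 1 - a = 1 := by omega
  rw [Run, h, Rw_succ, Rw_zero, one_mul]

lemma Run_top' (h : b ≤ a) (ha : 1 ≤ a) : Run n a b = E n a * Run n (a - 1) b := by
  have h1 : a + 1 - b = (a - b) + 1 := by omega
  have h2 : a - 1 + 1 - b = a - b := by omega
  rw [Run, Run, h1, h2, Rw_top]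
  have h3 : b + (a - b) = a := by omega
  rw [h3]

lemma Run_bot (h : b ≤ a) : Run n a b = Run n a (b + 1) * E n b := by
  have h1 : a + 1 - b = (a - b) + 1 := by omega
  have h2 : a + 1 - (b + 1) = a - b := by omega
  rw [Run, Run, h1, h2, Rw_succ]

lemma Run_concat (hbd : b ≤ d) (hda : d ≤ a) : Run n a b = Run n a (d + 1) * Run n d b := by
  have h1 : a + 1 - b = (d + 1 - b) + (a - d) := by omega
  have h2 : b + (d + 1 - b) = d + 1 := by omega
  have h3 : a + 1 - (d + 1) = a - d := by omega
  rw [Run, Run, Run, h1, Rw_concat, h2, h3]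

lemma ERun_comm_high (h : a + 2 ≤ c) : E n c * Run n a b = Run n a b * E n c := by
  by_cases hb : b ≤ a + 1
  · exact ER_comm_high n _ _ (by omega)
  · have hz : a + 1 - b = 0 := by omega
    rw [Run, hz]; simp

lemma ERun_comm_low (h : c + 2 ≤ b) : E n c * Run n a b = Run n a b * E n c :=
  ER_comm_low n _ _ (by omega)

lemma RunRun_comm (h : a' + 2 ≤ b) : Run n a b * Run n a' b' = Run n a' b' * Run n a b := by
  by_cases hb : b' ≤ a' + 1
  · exact RR_comm n _ _ (by omega)
  · have hz : a' + 1 - b' = 0 := by omega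
    simp only [Run, hz, Rw_zero, one_mul, mul_one]

lemma Run_absorb (h : b ≤ a) : E n a * Run n a b = Run n a b := by
  rcases Nat.eq_zero_or_pos a with ha | ha
  · subst ha
    have hb : b = 0 := by omega
    subst hb
    rw [Run_single, E_idem]
  · rw [Run_top' n h ha, ← mul_assoc, E_idem]

lemma Rw_drop : ∀ l b, Rw n b (l + 1) * E n (b + l) = Rw n b l * E n (b + l) := by
  intro l b
  match l with
  | 0 => simp [Rw_succ, E_idem]
  | l + 1 =>
      rw [Rw_top, Rw_top n l b, mul_assoc, mul_assoc]
      have hc : E n (b + l) * (Rw n b l * E n (b + (l + 1))) =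
          E n (b + l) * (E n (b + (l + 1)) * Rw n b l) := by
        rw [ER_comm_high n l b (by omega)]
      rw [hc, ← mul_assoc, ← mul_assoc]
      have e1 : b + (l + 1) = (b + l) + 1 := by omega
      rw [e1, E_abs2, mul_assoc, ER_comm_high n l b (by omega), ← mul_assoc, ← Rw_top]

lemma Run_drop (h : b < a) : Run n a b * E n a = Run n (a - 1) b * E n a := by
  have h3 : b + (a - b - 1 + 1) = a := by omega
  have := Rw_drop n (a - b - 1 + 1) b
  rw [h3] at this
  have h1 : a + 1 - b = (a - b - 1 + 1) + 1 := by omega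
  have h2 : a - 1 + 1 - b = a - b - 1 + 1 := by omega
  rw [Run, Run, h1, h2]
  exact this

lemma L5 (hb : b < b') (hba : b' ≤ a) :
    Run n a b * Run n a b' = Run n (a - 1) b * Run n a b' := by
  rw [Run_top' n hba (by omega), ← mul_assoc, Run_drop n (lt_of_lt_of_le hb hba), mul_assoc]

lemma mul_swap_l {M : Type*} [Monoid M] {x A : M} (h : x * A = A * x) (z : M) :
    x * (A * z) = A * (x * z) := by rw [← mul_assoc, h, mul_assoc]

lemma L4_sub (hba' : b + 1 ≤ a') :
    E n b * Run n a' (b + 1) * E n b = E n b * Run n a' (b + 1) := by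
  have g : Run n a' (b + 1) = Run n a' (b + 2) * E n (b + 1) := Run_bot n hba'
  have f1 : E n b * Run n a' (b + 2) = Run n a' (b + 2) * E n b :=
    ERun_comm_low n (show b + 2 ≤ b + 2 from le_rfl)
  rw [g]
  simp only [mul_assoc]
  rw [mul_swap_l f1, ← mul_assoc (E n b) (E n (b + 1)) (E n b), E_abs1, ← mul_assoc, ← f1,
    mul_assoc]

lemma L4_base (hba : b ≤ a) (haa : a < a') :
    Run n a b * Run n a' b = Run n a b * Run n a' (b + 1) := by
  have hba' : b + 1 ≤ a' := by omega
  rw [Run_bot n hba, Run_bot n (show b ≤ a' by omega)]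
  simp only [mul_assoc]
  congr 1
  rw [← mul_assoc (E n b) (Run n a' (b + 1)) (E n b), L4_sub n hba']

lemma L4 (hb : b' ≤ b) (hba : b ≤ a) (haa : a < a') :
    Run n a b * Run n a' b' = Run n a b' * Run n a' (b + 1) := by
  suffices H : ∀ k b', b - b' = k → b' ≤ b →
      Run n a b * Run n a' b' = Run n a b' * Run n a' (b + 1) by
    exact H (b - b') b' rfl hb
  intro k
  induction k with
  | zero =>
      intro b' hk hb'
      have : b' = b := by omega
      subst this
      exact L4_base n hba haa
  | succ k ih =>
      intro b' hk hb'
      have h1 : b' ≤ a' := by omega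
      rw [Run_bot n h1, ← mul_assoc, ih (b' + 1) (by omega) (by omega), mul_assoc,
        ← ERun_comm_low n (show b' + 2 ≤ b + 1 by omega), ← mul_assoc,
        ← Run_bot n (show b' ≤ a by omega)]

lemma L3 (hbc : b ≤ c) (hca : c + 1 ≤ a) :
    E n c * Run n a b = Run n c b * Run n a (c + 1) := by
  have e1 : Run n a b = Run n a (c + 2) * Run n (c + 1) b :=
    Run_concat n (by omega) (by omega)
  have e2 : Run n (c + 1) b = E n (c + 1) * Run n c b := by
    have := Run_top' n (show b ≤ c + 1 by omega) (by omega)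
    simpa using this
  set x := E n c with hx
  set y := E n (c + 1) with hy
  set A := Run n a (c + 2) with hA
  set B := Rw n b (c - b) with hB
  have e3 : Run n c b = x * B := by
    have h1 : c + 1 - b = (c - b) + 1 := by omega
    have h2 : b + (c - b) = c := by omega
    rw [Run, h1, Rw_top, h2]
  have f1 : x * A = A * x := ERun_comm_low n (show c + 2 ≤ c + 2 from le_rfl)
  have f2 : y * B = B * y := ER_comm_high n _ _ (by omega)
  have f3 : A * B = B * A := by
    have h1 : a + 1 - (c + 2) = a - c - 1 := by omega
    rw [hA, Run, h1]
    exact RR_comm n _ _ (by omega)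
  have fxyx : x * y * x = x * y := E_abs1 n c
  calc x * Run n a b = x * A * y * x * B := by
        rw [e1, e2, e3]; simp only [mul_assoc]
    _ = A * (x * y * x) * B := by rw [f1]; simp only [mul_assoc]
    _ = A * (x * y) * B := by rw [fxyx]
    _ = A * x * (y * B) := by simp only [mul_assoc]
    _ = A * x * (B * y) := by rw [f2]
    _ = x * (A * B) * y := by rw [← f1]; simp only [mul_assoc]
    _ = x * B * (A * y) := by rw [f3]; simp only [mul_assoc]
    _ = Run n c b * Run n a (c + 1) := by
        rw [e3]
        congr 1
        exact (Run_bot n (show c + 1 ≤ a from hca)).symm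


section Lists

/-- normalization of a run followed by a normal form whose bottoms may clash. -/
def fixup : ℕ × ℕ → List (ℕ × ℕ) → List (ℕ × ℕ)
  | p, [] => [p]
  | (a, b), (a', b') :: t =>
      if b < b' then (a, b) :: (a', b') :: t else (a, b') :: fixup (a', b + 1) t

/-- result of left-multiplying a normal form whose first run has top `a+1`. -/
def insMerge (a b : ℕ) : List (ℕ × ℕ) → List (ℕ × ℕ)
  | (a2, b2) :: t => if a2 = a + 1 then (a, b) :: (a2, b2) :: t else (a + 1, b) :: (a2, b2) :: t
  | [] => [(a + 1, b)]

/-- insertion of the generator `c` at the left of a normal form. -/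
def ins (c : ℕ) : List (ℕ × ℕ) → List (ℕ × ℕ)
  | [] => [(c, c)]
  | (a, b) :: t =>
    if a + 2 ≤ c then (a, b) :: ins c t
    else if c = a + 1 then insMerge a b t
    else if c + 1 ≤ b then (c, c) :: (a, b) :: t
    else if c = a then (a, b) :: t
    else (c, b) :: fixup (a, c + 1) t

end Lists

variable (n : ℕ)

/-- product of runs in `HK`. -/
def WProd : List (ℕ × ℕ) → HK (arrQn n)
  | [] => 1
  | (a, b) :: t => Run n a b * WProd t

@[simp] lemma WProd_nil : WProd n [] = 1 := rfl

@[simp] lemma WProd_cons (a b : ℕ) (t : List (ℕ × ℕ)) :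
    WProd n ((a, b) :: t) = Run n a b * WProd n t := rfl

/-- validity (normality) of a list of runs, relative to strict lower bounds. -/
def Ok : ℕ → ℕ → List (ℕ × ℕ) → Prop
  | _, _, [] => True
  | la, lb, (a, b) :: t => la ≤ a ∧ lb ≤ b ∧ b ≤ a ∧ a < n ∧ Ok (a + 1) (b + 1) t

lemma Ok_mono : ∀ (ν : List (ℕ × ℕ)) {la lb la' lb' : ℕ},
    la' ≤ la → lb' ≤ lb → Ok n la lb ν → Ok n la' lb' ν := by
  intro ν
  cases ν with
  | nil => intro _ _ _ _ _ _ _; trivial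
  | cons p t =>
      obtain ⟨a, b⟩ := p
      intro la lb la' lb' h1 h2 h
      obtain ⟨ha, hb, hba, han, ht⟩ := h
      exact ⟨by omega, by omega, hba, han, ht⟩

lemma fix_ok : ∀ (t : List (ℕ × ℕ)) (a b lb2 : ℕ), b ≤ a → a < n →
    Ok n (a + 1) lb2 t → Ok n a (min b lb2) (fixup (a, b) t) := by
  intro t
  induction t with
  | nil =>
      intro a b lb2 hba han _
      exact ⟨le_refl a, by omega, hba, han, trivial⟩
  | cons p t' ih =>
      obtain ⟨a', b'⟩ := p
      intro a b lb2 hba han hok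
      obtain ⟨ha', hb', hb'a', ha'n, ht'⟩ := hok
      by_cases hbb : b < b'
      · simp only [fixup, if_pos hbb]
        exact ⟨le_refl a, by omega, hba, han, ⟨ha', by omega, hb'a', ha'n, ht'⟩⟩
      · simp only [fixup, if_neg hbb]
        have H := ih a' (b + 1) (b' + 1) (by omega) ha'n ht'
        refine ⟨le_refl a, by omega, by omega, han, ?_⟩
        exact Ok_mono n _ (by omega) (by omega) H

lemma fix_word : ∀ (t : List (ℕ × ℕ)) (a b lb2 : ℕ), b ≤ a →
    Ok n (a + 1) lb2 t → Run n a b * WProd n t = WProd n (fixup (a, b) t) := by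
  intro t
  induction t with
  | nil => intro a b lb2 _ _; simp [fixup]
  | cons p t' ih =>
      obtain ⟨a', b'⟩ := p
      intro a b lb2 hba hok
      obtain ⟨ha', hb', hb'a', ha'n, ht'⟩ := hok
      by_cases hbb : b < b'
      · simp only [fixup, if_pos hbb, WProd_cons]
      · simp only [fixup, if_neg hbb]
        rw [WProd_cons, WProd_cons, ← mul_assoc,
          L4 n (by omega) (by omega) (by omega),
          mul_assoc, ih a' (b + 1) (b' + 1) (by omega) ht']

lemma ins_ok (c : ℕ) (hc : c < n) : ∀ (ν : List (ℕ × ℕ)) (la lb : ℕ),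
    Ok n la lb ν → Ok n (min c la) (min c lb) (ins c ν) := by
  intro ν
  induction ν with
  | nil =>
      intro la lb _
      exact ⟨by omega, by omega, le_refl c, hc, trivial⟩
  | cons p t ih =>
      obtain ⟨a, b⟩ := p
      intro la lb hok
      obtain ⟨hla, hlb, hba, han, ht⟩ := hok
      by_cases h1 : a + 2 ≤ c
      · simp only [ins, if_pos h1]
        refine ⟨by omega, by omega, hba, han, ?_⟩
        exact Ok_mono n _ (by omega) (by omega) (ih (a + 1) (b + 1) ht)
      · simp only [ins, if_neg h1]
        by_cases h2 : c = a + 1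
        · simp only [if_pos h2]
          cases t with
          | nil => exact ⟨by omega, by omega, by omega, by omega, trivial⟩
          | cons q t' =>
              obtain ⟨a2, b2⟩ := q
              obtain ⟨ha2, hb2, hb2a2, ha2n, ht'⟩ := ht
              by_cases h3 : a2 = a + 1
              · simp only [insMerge, if_pos h3]
                exact ⟨by omega, by omega, hba, han, ⟨ha2, hb2, hb2a2, ha2n, ht'⟩⟩
              · simp only [insMerge, if_neg h3]
                exact ⟨by omega, by omega, by omega, by omega,
                  ⟨by omega, hb2, hb2a2, ha2n, ht'⟩⟩
        · simp only [if_neg h2]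
          by_cases h3 : c + 1 ≤ b
          · simp only [if_pos h3]
            exact ⟨by omega, by omega, le_refl c, hc,
              ⟨by omega, by omega, hba, han, ht⟩⟩
          · simp only [if_neg h3]
            by_cases h4 : c = a
            · simp only [if_pos h4]
              exact ⟨by omega, by omega, hba, han, ht⟩
            · simp only [if_neg h4]
              have H := fix_ok n t a (c + 1) (b + 1) (by omega) han ht
              refine ⟨by omega, by omega, by omega, hc, ?_⟩
              exact Ok_mono n _ (by omega) (by omega) H

lemma Run_merge (a b : ℕ) (h : b ≤ a) : E n (a + 1) * Run n a b = Run n (a + 1) b := by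
  have := Run_top' n (show b ≤ a + 1 by omega) (by omega)
  simpa using this.symm

lemma ins_word (c : ℕ) : ∀ (ν : List (ℕ × ℕ)) (la lb : ℕ),
    Ok n la lb ν → E n c * WProd n ν = WProd n (ins c ν) := by
  intro ν
  induction ν with
  | nil =>
      intro la lb _
      simp [ins, Run_single]
  | cons p t ih =>
      obtain ⟨a, b⟩ := p
      intro la lb hok
      obtain ⟨hla, hlb, hba, han, ht⟩ := hok
      by_cases h1 : a + 2 ≤ c
      · simp only [ins, if_pos h1, WProd_cons, ← mul_assoc, ERun_comm_high n h1]
        rw [mul_assoc, ih (a + 1) (b + 1) ht]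
      · simp only [ins, if_neg h1]
        by_cases h2 : c = a + 1
        · simp only [if_pos h2]
          subst h2
          cases t with
          | nil =>
              simp only [insMerge, WProd_cons, WProd_nil, mul_one, ← mul_assoc,
                Run_merge n a b hba]
          | cons q t' =>
              obtain ⟨a2, b2⟩ := q
              obtain ⟨ha2, hb2, hb2a2, ha2n, ht'⟩ := ht
              by_cases h3 : a2 = a + 1
              · simp only [insMerge, if_pos h3]
                subst h3
                rw [WProd_cons, WProd_cons, ← mul_assoc, Run_merge n a b hba, ← mul_assoc,
                  L5 n (show b < b2 by omega) (show b2 ≤ a + 1 by omega)]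
                have : a + 1 - 1 = a := by omega
                rw [this, mul_assoc]
              · simp only [insMerge, if_neg h3]
                rw [WProd_cons, WProd_cons, ← mul_assoc, Run_merge n a b hba]
                simp only [WProd_cons, mul_assoc]
        · simp only [if_neg h2]
          by_cases h3 : c + 1 ≤ b
          · simp only [if_pos h3, WProd_cons, Run_single, ← mul_assoc]
          · simp only [if_neg h3]
            by_cases h4 : c = a
            · simp only [if_pos h4]
              subst h4
              rw [WProd_cons, ← mul_assoc, Run_absorb n hba]
            · simp only [if_neg h4]
              rw [WProd_cons, ← mul_assoc, L3 n (by omega) (by omega), mul_assoc,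
                fix_word n t a (c + 1) (b + 1) (by omega) ht, WProd_cons]

theorem complete (z : HK (arrQn n)) : ∃ ν, Ok n 0 0 ν ∧ WProd n ν = z := by
  induction z using Con.induction_on with
  | _ w =>
      induction w using FreeMonoid.recOn with
      | one => exact ⟨[], trivial, rfl⟩
      | of_mul x xs ih =>
          obtain ⟨ν, hok, hw⟩ := ih
          refine ⟨ins x.val ν, ?_, ?_⟩
          · exact Ok_mono n _ (by omega) (by omega) (ins_ok n x.val x.isLt ν 0 0 hok)
          · rw [← ins_word n x.val ν 0 0 hok, hw]
            have hE : E n x.val = ((FreeMonoid.of x : FreeMonoid (Fin n)) :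
                HK (arrQn n)) := by
              simp only [E, dif_pos x.isLt]
              rfl
            rw [hE]
            rfl


/-! ### Semantics -/

/-- the generator function: merges `c+1` down to `c`. -/
def Fgen (c : ℕ) : Function.End ℕ := fun a => if a = c + 1 then c else a

/-- shift of the interval `[b+1, b+l]` down by one. -/
def Sfun (b l : ℕ) : ℕ → ℕ := fun x => if b + 1 ≤ x ∧ x ≤ b + l then x - 1 else x

def Bpred (m : ℕ) (f : ℕ → ℕ) : Prop :=
  Monotone f ∧ (∀ x, f x ≤ x) ∧ ∀ x, m ≤ x → f x = x

/-- the set of order-preserving, decreasing maps fixing everything `≥ m`. -/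
def BS (m : ℕ) : Type := {f : ℕ → ℕ // Bpred m f}

/-- The semantics homomorphism. -/
def phi : HK (arrQn n) →* Function.End ℕ :=
  Con.lift _ (FreeMonoid.lift fun t : Fin n => Fgen t.val) (by
    refine Con.conGen_le.mpr fun x y h => ?_
    rw [Con.ker_rel]
    induction h with
    | idem t =>
        simp only [map_mul, FreeMonoid.lift_eval_of]
        funext a
        show Fgen t.val (Fgen t.val a) = Fgen t.val a
        simp only [Fgen]; split_ifs <;> omega
    | braid s t =>
        simp only [map_mul, FreeMonoid.lift_eval_of]
        funext a
        show Fgen s.val (Fgen t.val (Fgen s.val a)) = Fgen t.val (Fgen s.val (Fgen t.val a))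
        simp only [Fgen]; split_ifs <;> omega
    | absorb s t hns =>
        simp only [map_mul, FreeMonoid.lift_eval_of]
        funext a
        have hd : (s : ℕ) ≠ (t : ℕ) + 1 := fun hc => hns hc.symm
        show Fgen t.val (Fgen s.val (Fgen t.val a)) = Fgen s.val (Fgen t.val a)
        simp only [Fgen]; split_ifs <;> omega)

lemma phi_x (t : Fin n) : phi n (HK.x (arrQn n) t) = Fgen t.val := by
  show phi n ((HKCon (arrQn n)).mk' (FreeMonoid.of t)) = Fgen t.val
  simp [phi, Con.lift_mk', Con.lift_coe, FreeMonoid.lift_eval_of]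
  exact (Con.lift_coe _ _).trans (FreeMonoid.lift_eval_of _ _)

lemma phi_E (c : ℕ) (hc : c < n) : phi n (E n c) = Fgen c := by
  rw [E, dif_pos hc, phi_x]

lemma End_mul_apply (f g : Function.End ℕ) (x : ℕ) : (f * g) x = f (g x) := rfl

lemma End_one_apply (x : ℕ) : (1 : Function.End ℕ) x = x := rfl

lemma phi_Rw : ∀ l b, b + l ≤ n → phi n (Rw n b l) = Sfun b l := by
  intro l
  induction l with
  | zero =>
      intro b _
      rw [Rw_zero, map_one]
      funext x
      rw [End_one_apply, Sfun, if_neg (by omega)]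
  | succ l ih =>
      intro b h
      rw [Rw_top, map_mul, phi_E n _ (by omega), ih b (by omega)]
      funext x
      show Fgen (b + l) (Sfun b l x) = Sfun b (l + 1) x
      simp only [Fgen, Sfun]
      split_ifs <;> omega

lemma phi_Run (a b : ℕ) (h : b ≤ a) (han : a < n) :
    phi n (Run n a b) = Sfun b (a + 1 - b) := by
  rw [Run, phi_Rw n _ _ (by omega)]

lemma Sfun_le (b l x : ℕ) : Sfun b l x ≤ x := by
  simp only [Sfun]; split_ifs <;> omega

lemma Sfun_strict (b l : ℕ) {u v : ℕ} (hu : b + 1 ≤ u) (huv : u < v) :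
    Sfun b l u < Sfun b l v := by
  simp only [Sfun]; split_ifs <;> omega

lemma WProd_append (xs ys : List (ℕ × ℕ)) :
    WProd n (xs ++ ys) = WProd n xs * WProd n ys := by
  induction xs with
  | nil => simp
  | cons p t ih =>
      obtain ⟨a, b⟩ := p
      simp only [List.cons_append, WProd_cons, ih, mul_assoc]

lemma sem_le : ∀ (ν : List (ℕ × ℕ)) (la lb : ℕ), Ok n la lb ν →
    ∀ x, phi n (WProd n ν) x ≤ x := by
  intro ν
  induction ν with
  | nil => intro _ _ _ x; rw [WProd_nil, map_one, End_one_apply]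
  | cons p t ih =>
      obtain ⟨a, b⟩ := p
      intro la lb hok x
      obtain ⟨hla, hlb, hba, han, ht⟩ := hok
      rw [WProd_cons, map_mul, End_mul_apply, phi_Run n a b hba han]
      exact le_trans (Sfun_le _ _ _) (ih _ _ ht x)

lemma sem_min : ∀ (ν : List (ℕ × ℕ)) (la lb : ℕ), Ok n la lb ν →
    ∀ x, min x lb ≤ phi n (WProd n ν) x := by
  intro ν
  induction ν with
  | nil => intro _ _ _ x; rw [WProd_nil, map_one, End_one_apply]; omega
  | cons p t ih =>
      obtain ⟨a, b⟩ := p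
      intro la lb hok x
      obtain ⟨hla, hlb, hba, han, ht⟩ := hok
      rw [WProd_cons, map_mul, End_mul_apply, phi_Run n a b hba han]
      have h1 := ih _ _ ht x
      set y := phi n (WProd n t) x with hy
      simp only [Sfun]
      split_ifs <;> omega

lemma sem_high : ∀ (ν : List (ℕ × ℕ)) (la lb : ℕ), Ok n la lb ν →
    ∀ x, (∀ p ∈ ν, p.1 + 2 ≤ x) → phi n (WProd n ν) x = x := by
  intro ν
  induction ν with
  | nil => intro _ _ _ x _; rw [WProd_nil, map_one, End_one_apply]
  | cons p t ih =>
      obtain ⟨a, b⟩ := p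
      intro la lb hok x hx
      obtain ⟨hla, hlb, hba, han, ht⟩ := hok
      rw [WProd_cons, map_mul, End_mul_apply, phi_Run n a b hba han,
        ih _ _ ht x (fun q hq => hx q (List.mem_cons_of_mem _ hq))]
      have := hx (a, b) List.mem_cons_self
      simp only at this
      simp only [Sfun]
      rw [if_neg (by omega)]

lemma Ok_append : ∀ (xs : List (ℕ × ℕ)) (la lb a b : ℕ),
    Ok n la lb (xs ++ [(a, b)]) →
    Ok n la lb xs ∧ la ≤ a ∧ lb ≤ b ∧ b ≤ a ∧ a < n ∧
      (∀ p ∈ xs, p.1 + 1 ≤ a ∧ p.2 + 1 ≤ b) := by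
  intro xs
  induction xs with
  | nil =>
      intro la lb a b hok
      obtain ⟨h1, h2, h3, h4, -⟩ := hok
      exact ⟨trivial, h1, h2, h3, h4, by simp⟩
  | cons p t ih =>
      obtain ⟨a1, b1⟩ := p
      intro la lb a b hok
      obtain ⟨h1, h2, h3, h4, ht⟩ := hok
      obtain ⟨ht', ha, hb, hba, han, hmem⟩ := ih _ _ _ _ ht
      refine ⟨⟨h1, h2, h3, h4, ht'⟩, by omega, by omega, hba, han, ?_⟩
      intro q hq
      rcases List.mem_cons.mp hq with rfl | hq
      · exact ⟨by omega, by omega⟩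
      · exact hmem q hq

lemma sem_strict : ∀ (xs : List (ℕ × ℕ)) (la lb a b : ℕ),
    Ok n la lb (xs ++ [(a, b)]) →
    ∀ x y, b < x → x < y →
      phi n (WProd n (xs ++ [(a, b)])) x < phi n (WProd n (xs ++ [(a, b)])) y := by
  intro xs
  induction xs with
  | nil =>
      intro la lb a b hok x y hbx hxy
      obtain ⟨h1, h2, h3, h4, -⟩ := hok
      simp only [List.nil_append, WProd_cons, WProd_nil, mul_one]
      rw [phi_Run n a b h3 h4]
      exact Sfun_strict _ _ (by omega) hxy
  | cons p t ih =>
      obtain ⟨a1, b1⟩ := p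
      intro la lb a b hok x y hbx hxy
      obtain ⟨h1, h2, h3, h4, ht⟩ := hok
      have hOA := Ok_append n t _ _ _ _ ht
      have hb1b : b1 + 1 ≤ b := hOA.2.2.1
      simp only [List.cons_append, WProd_cons, map_mul, End_mul_apply]
      rw [phi_Run n a1 b1 h3 h4]
      have hrec := ih _ _ a b ht x y hbx hxy
      have hmin := sem_min n (t ++ [(a, b)]) (a1 + 1) (b1 + 1) ht x
      exact Sfun_strict _ _ (by omega) hrec

lemma sem_merge : ∀ (xs : List (ℕ × ℕ)) (la lb a b : ℕ),
    Ok n la lb (xs ++ [(a, b)]) →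
    phi n (WProd n (xs ++ [(a, b)])) b = phi n (WProd n (xs ++ [(a, b)])) (b + 1) := by
  intro xs
  induction xs with
  | nil =>
      intro la lb a b hok
      obtain ⟨h1, h2, h3, h4, -⟩ := hok
      simp only [List.nil_append, WProd_cons, WProd_nil, mul_one]
      rw [phi_Run n a b h3 h4]
      simp only [Sfun]
      split_ifs <;> omega
  | cons p t ih =>
      obtain ⟨a1, b1⟩ := p
      intro la lb a b hok
      obtain ⟨h1, h2, h3, h4, ht⟩ := hok
      simp only [List.cons_append, WProd_cons, map_mul, End_mul_apply]
      rw [ih _ _ a b ht]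

lemma sem_top : ∀ (xs : List (ℕ × ℕ)) (la lb a b : ℕ),
    Ok n la lb (xs ++ [(a, b)]) →
    phi n (WProd n (xs ++ [(a, b)])) (a + 1) ≤ a := by
  intro xs
  induction xs with
  | nil =>
      intro la lb a b hok
      obtain ⟨h1, h2, h3, h4, -⟩ := hok
      simp only [List.nil_append, WProd_cons, WProd_nil, mul_one]
      rw [phi_Run n a b h3 h4]
      simp only [Sfun]
      split_ifs <;> omega
  | cons p t ih =>
      obtain ⟨a1, b1⟩ := p
      intro la lb a b hok
      obtain ⟨h1, h2, h3, h4, ht⟩ := hok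
      simp only [List.cons_append, WProd_cons, map_mul, End_mul_apply]
      rw [phi_Run n a1 b1 h3 h4]
      exact le_trans (Sfun_le _ _ _) (ih _ _ a b ht)

lemma sem_fix_high (xs : List (ℕ × ℕ)) (la lb a b : ℕ)
    (hok : Ok n la lb (xs ++ [(a, b)])) :
    ∀ x, a + 2 ≤ x → phi n (WProd n (xs ++ [(a, b)])) x = x := by
  intro x hx
  apply sem_high n _ _ _ hok
  intro p hp
  rcases List.mem_append.mp hp with h | h
  · have := (Ok_append n xs _ _ _ _ hok).2.2.2.2.2 p h
    omega
  · simp only [List.mem_singleton] at h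
    subst h
    omega

lemma sem_peel (xs : List (ℕ × ℕ)) (la lb a b : ℕ)
    (hok : Ok n la lb (xs ++ [(a, b)])) (y : ℕ) :
    phi n (WProd n xs) y =
      if y = a + 1 then a + 1
      else if b ≤ y ∧ y ≤ a then phi n (WProd n (xs ++ [(a, b)])) (y + 1)
      else phi n (WProd n (xs ++ [(a, b)])) y := by
  have hOA := Ok_append n xs _ _ _ _ hok
  have hba : b ≤ a := hOA.2.2.2.1
  have han : a < n := hOA.2.2.2.2.1
  have hsplit : ∀ z, phi n (WProd n (xs ++ [(a, b)])) z =
      phi n (WProd n xs) (Sfun b (a + 1 - b) z) := by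
    intro z
    rw [WProd_append, map_mul, End_mul_apply]
    simp only [WProd_cons, WProd_nil, mul_one]
    rw [phi_Run n a b hba han]
  by_cases h1 : y = a + 1
  · subst h1
    rw [if_pos rfl]
    apply sem_high n xs _ _ hOA.1
    intro p hp
    have := hOA.2.2.2.2.2 p hp
    omega
  · rw [if_neg h1]
    by_cases h2 : b ≤ y ∧ y ≤ a
    · rw [if_pos h2, hsplit]
      have : Sfun b (a + 1 - b) (y + 1) = y := by
        simp only [Sfun]
        rw [if_pos (by omega)]
        omega
      rw [this]

    · rw [if_neg h2, hsplit]
      have : Sfun b (a + 1 - b) y = y := by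
        simp only [Sfun]; rw [if_neg (by omega)]
      rw [this]

lemma eq_nil_or_append (l : List (ℕ × ℕ)) : l = [] ∨ ∃ xs a b, l = xs ++ [(a, b)] := by
  rcases List.eq_nil_or_concat l with h | ⟨xs, ⟨a, b⟩, h⟩
  · exact Or.inl h
  · exact Or.inr ⟨xs, a, b, by rw [h, List.concat_eq_append]⟩

theorem sem_inj : ∀ (N : ℕ) (ν ν' : List (ℕ × ℕ)), ν.length ≤ N →
    Ok n 0 0 ν → Ok n 0 0 ν' →
    phi n (WProd n ν) = phi n (WProd n ν') → ν = ν' := by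
  intro N
  induction N with
  | zero =>
      intro ν ν' hlen hok hok' heq
      have hν : ν = [] := List.length_eq_zero_iff.mp (by omega)
      subst hν
      rcases eq_nil_or_append ν' with h | ⟨xs, a, b, rfl⟩
      · exact h.symm
      · exfalso
        have hm := sem_merge n xs 0 0 a b hok'
        rw [← heq] at hm
        simp only [WProd_nil, map_one, End_one_apply] at hm
        omega
  | succ N ih =>
      intro ν ν' hlen hok hok' heq
      rcases eq_nil_or_append ν with rfl | ⟨xs, a, b, rfl⟩
      · rcases eq_nil_or_append ν' with h | ⟨xs', a', b', rfl⟩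
        · exact h.symm
        · exfalso
          have hm := sem_merge n xs' 0 0 a' b' hok'
          rw [← heq] at hm
          simp only [WProd_nil, map_one, End_one_apply] at hm
          omega
      · rcases eq_nil_or_append ν' with rfl | ⟨xs', a', b', rfl⟩
        · exfalso
          have hm := sem_merge n xs 0 0 a b hok
          rw [heq] at hm
          simp only [WProd_nil, map_one, End_one_apply] at hm
          omega
        · -- first the tops agree
          have hfun : ∀ z, phi n (WProd n (xs ++ [(a, b)])) z =
              phi n (WProd n (xs' ++ [(a', b')])) z := fun z => by rw [heq]
          have haa : a = a' := by
            rcases lt_trichotomy a a' with h | h | h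
            · exfalso
              have h1 := sem_fix_high n xs 0 0 a b hok (a' + 1) (by omega)
              have h2 := sem_top n xs' 0 0 a' b' hok'
              rw [hfun] at h1
              omega
            · exact h
            · exfalso
              have h1 := sem_fix_high n xs' 0 0 a' b' hok' (a + 1) (by omega)
              have h2 := sem_top n xs 0 0 a b hok
              rw [← hfun] at h1
              omega
          subst haa
          have hbb : b = b' := by
            rcases lt_trichotomy b b' with h | h | h
            · exfalso
              have h1 := sem_merge n xs' 0 0 a b' hok'
              have h2 := sem_strict n xs 0 0 a b hok b' (b' + 1) (by omega) (by omega)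
              rw [hfun, hfun] at h2
              omega
            · exact h
            · exfalso
              have h1 := sem_merge n xs 0 0 a b hok
              have h2 := sem_strict n xs' 0 0 a b' hok' b (b + 1) (by omega) (by omega)
              rw [← hfun, ← hfun] at h2
              omega
          subst hbb
          have htail : phi n (WProd n xs) = phi n (WProd n xs') := by
            funext y
            rw [sem_peel n xs 0 0 a b hok y, sem_peel n xs' 0 0 a b hok' y, heq]
          have hlxs : xs.length ≤ N := by
            have := hlen
            simp only [List.length_append, List.length_singleton] at this
            omega
          have := ih xs xs' hlxs (Ok_append n xs 0 0 a b hok).1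
            (Ok_append n xs' 0 0 a b hok').1 htail
          rw [this]

lemma Bpred_id (m : ℕ) : Bpred m (1 : Function.End ℕ) :=
  ⟨fun _ _ h => h, fun x => le_refl x, fun _ _ => rfl⟩

lemma Bpred_comp (m : ℕ) {f g : Function.End ℕ} (hf : Bpred m f) (hg : Bpred m g) :
    Bpred m (f * g) := by
  refine ⟨fun x y h => hf.1 (hg.1 h), fun x => le_trans (hf.2.1 _) (hg.2.1 x), fun x hx => ?_⟩
  show f (g x) = x
  rw [hg.2.2 x hx, hf.2.2 x hx]

lemma Bpred_Fgen (c : ℕ) (hc : c < n) : Bpred (n + 1) (Fgen c) := by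
  refine ⟨fun x y h => ?_, fun x => ?_, fun x hx => ?_⟩
  · simp only [Fgen]; split_ifs <;> omega
  · simp only [Fgen]; split_ifs <;> omega
  · simp only [Fgen]; rw [if_neg (by omega)]

lemma phi_mem_B (z : HK (arrQn n)) : Bpred (n + 1) (phi n z) := by
  induction z using Con.induction_on with
  | _ w =>
      induction w using FreeMonoid.recOn with
      | one =>
          have : ((1 : FreeMonoid (Fin n)) : HK (arrQn n)) = 1 := rfl
          rw [this, map_one]
          exact Bpred_id _
      | of_mul x xs ih =>
          have : ((FreeMonoid.of x * xs : FreeMonoid (Fin n)) : HK (arrQn n)) =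
              (FreeMonoid.of x : FreeMonoid (Fin n)) * (xs : FreeMonoid (Fin n)) := rfl
          rw [this, map_mul]
          refine Bpred_comp _ ?_ ih
          have : ((FreeMonoid.of x : FreeMonoid (Fin n)) : HK (arrQn n)) =
              HK.x (arrQn n) x := rfl
          rw [this, phi_x]
          exact Bpred_Fgen n x.val x.isLt

lemma defect_aux (f : Function.End ℕ) (hf : Bpred (n + 1) f) (hne : ∃ x, f x ≠ x) :
    ∃ i < n, ∃ g : Function.End ℕ, Bpred (n + 1) g ∧ f = g * Fgen i ∧
      (∑ x ∈ Finset.range (n + 1), (x - g x)) < ∑ x ∈ Finset.range (n + 1), (x - f x) := by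
  classical
  obtain ⟨hm, hle, hfix⟩ := hf
  set x1 := Nat.find hne with hx1def
  have hx1 : f x1 ≠ x1 := Nat.find_spec hne
  have hx1min : ∀ y, y < x1 → f y = y := by
    intro y hy
    by_contra hc
    have h2 : Nat.find hne ≤ y := Nat.find_le hc
    omega
  have hx1pos : 1 ≤ x1 := by
    by_contra hc
    have h1 := hle x1
    omega
  have hx1lt : f x1 < x1 := lt_of_le_of_ne (hle x1) hx1
  have hx1n : x1 ≤ n := by
    by_contra hc
    exact hx1 (hfix x1 (by omega))
  have hprev : f (x1 - 1) = x1 - 1 := hx1min _ (by omega)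
  have hfx1 : f x1 = x1 - 1 := by
    have := hm (show x1 - 1 ≤ x1 by omega)
    omega
  have hPx : f (x1 - 1) = f (x1 - 1 + 1) := by
    have : x1 - 1 + 1 = x1 := by omega
    rw [this, hprev, hfx1]
  set i := Nat.findGreatest (fun j => f j = f (j + 1)) n with hidef
  have hPi : f i = f (i + 1) :=
    Nat.findGreatest_spec (P := fun j => f j = f (j + 1)) (show x1 - 1 ≤ n by omega) hPx
  have hin : i ≤ n := by
    rw [hidef]
    exact Nat.findGreatest_le n
  have hiltn : i < n := by
    rcases Nat.lt_or_ge i n with h | h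
    · exact h
    · exfalso
      have hieq : i = n := by omega
      have h1 : f (n + 1) = n + 1 := hfix _ (le_refl _)
      have h2 : f n ≤ n := hle n
      rw [hieq] at hPi
      omega
  have hnotP : ¬ (f (i + 1) = f (i + 1 + 1)) :=
    Nat.findGreatest_is_greatest (P := fun j => f j = f (j + 1)) (n := n) (by omega) (by omega)
  rw [show i + 1 + 1 = i + 2 from rfl] at hnotP
  have hlt12 : f (i + 1) < f (i + 2) :=
    lt_of_le_of_ne (hm (by omega)) hnotP
  have hfi1 : f (i + 1) < i + 1 := by
    have h1 : f (i + 1) ≤ i + 1 := hle _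
    have h3 : f i ≤ i := hle i
    omega
  refine ⟨i, hiltn, fun x => if x = i + 1 then min (f (i + 2)) (i + 1) else f x, ?_, ?_, ?_⟩
  · refine ⟨monotone_nat_of_le_succ fun x => ?_, fun x => ?_, fun x hx => ?_⟩
    · show (if x = i + 1 then min (f (i + 2)) (i + 1) else f x) ≤
        (if x + 1 = i + 1 then min (f (i + 2)) (i + 1) else f (x + 1))
      by_cases e1 : x = i + 1
      · subst e1
        rw [if_pos rfl, if_neg (by omega), show i + 1 + 1 = i + 2 from rfl]
        omega
      · by_cases e2 : x + 1 = i + 1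
        · have hx : x = i := by omega
          subst hx
          rw [if_neg e1, if_pos e2]
          have := hle i
          omega
        · rw [if_neg e1, if_neg e2]
          exact hm (Nat.le_succ x)
    · show (if x = i + 1 then min (f (i + 2)) (i + 1) else f x) ≤ x
      have h1 := hle x
      split_ifs <;> omega
    · show (if x = i + 1 then min (f (i + 2)) (i + 1) else f x) = x
      rw [if_neg (by omega)]
      exact hfix x hx
  · funext x
    show f x = (if Fgen i x = i + 1 then min (f (i + 2)) (i + 1) else f (Fgen i x))
    by_cases hx : x = i + 1
    · subst hx
      have hFg : Fgen i (i + 1) = i := by simp [Fgen]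
      rw [hFg, if_neg (by omega)]
      omega
    · have hFg : Fgen i x = x := by
        simp only [Fgen]; rw [if_neg hx]
      rw [hFg, if_neg hx]
  · apply Finset.sum_lt_sum
    · intro x hx
      show x - (if x = i + 1 then min (f (i + 2)) (i + 1) else f x) ≤ x - f x
      by_cases e : x = i + 1
      · subst e
        rw [if_pos rfl]
        omega
      · rw [if_neg e]
    · refine ⟨i + 1, Finset.mem_range.mpr (by omega), ?_⟩
      show i + 1 - (if i + 1 = i + 1 then min (f (i + 2)) (i + 1) else f (i + 1)) <
        i + 1 - f (i + 1)
      rw [if_pos rfl]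
      omega

lemma phi_surj (f : Function.End ℕ) (hf : Bpred (n + 1) f) :
    ∃ z : HK (arrQn n), phi n z = f := by
  suffices H : ∀ (D : ℕ) (f : Function.End ℕ), Bpred (n + 1) f →
      (∑ x ∈ Finset.range (n + 1), (x - f x)) ≤ D → ∃ z : HK (arrQn n), phi n z = f by
    exact H _ f hf le_rfl
  intro D
  induction D with
  | zero =>
      intro f hf hD
      refine ⟨1, ?_⟩
      rw [map_one]
      funext x
      show x = f x
      by_cases hx : x ≤ n
      · have h0 : (x - f x) = 0 := by
          have h1 : (x - f x) ≤ ∑ y ∈ Finset.range (n + 1), (y - f y) :=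
            Finset.single_le_sum (f := fun y => y - f y) (fun _ _ => Nat.zero_le _)
              (Finset.mem_range.mpr (by omega))
          omega
        have := hf.2.1 x
        omega
      · exact (hf.2.2 x (by omega)).symm
  | succ D ih =>
      intro f hf hD
      by_cases hid : ∀ x, f x = x
      · refine ⟨1, ?_⟩
        rw [map_one]
        funext x
        exact (hid x).symm
      · obtain ⟨i, hin, g, hg, hfg, hlt⟩ := defect_aux n f hf (not_forall.mp hid)
        obtain ⟨z, hz⟩ := ih g hg (by omega)
        refine ⟨z * E n i, ?_⟩
        rw [map_mul, hz, phi_E n i hin, hfg]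

/-! ### Counting -/

def glue (c : ℕ) (p q : ℕ → ℕ) : ℕ → ℕ := fun x =>
  if x = 0 then 0 else if x ≤ c then p (x - 1) else q (x - (c + 1)) + (c + 1)

lemma glue_mem (k c : ℕ) (hc : c ≤ k) (p q : ℕ → ℕ) (hp : Bpred c p)
    (hq : Bpred (k - c) q) : Bpred (k + 1) (glue c p q) := by
  refine ⟨monotone_nat_of_le_succ fun x => ?_, fun x => ?_, fun x hx => ?_⟩
  · simp only [glue]
    by_cases h0 : x = 0
    · subst h0
      rw [if_pos rfl]
      exact Nat.zero_le _
    · rw [if_neg h0, if_neg (show ¬ x + 1 = 0 by omega)]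
      by_cases h1 : x ≤ c
      · rw [if_pos h1]
        by_cases h2 : x + 1 ≤ c
        · rw [if_pos h2]
          have := hp.1 (show x - 1 ≤ x + 1 - 1 by omega)
          exact this
        · rw [if_neg h2]
          have h3 := hp.2.1 (x - 1)
          have h4 : 0 ≤ q (x + 1 - (c + 1)) := Nat.zero_le _
          omega
      · rw [if_neg h1, if_neg (by omega)]
        have := hq.1 (show x - (c + 1) ≤ x + 1 - (c + 1) by omega)
        omega
  · simp only [glue]
    by_cases h0 : x = 0
    · subst h0; rw [if_pos rfl]
    · rw [if_neg h0]
      by_cases h1 : x ≤ c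
      · rw [if_pos h1]
        have := hp.2.1 (x - 1)
        omega
      · rw [if_neg h1]
        have := hq.2.1 (x - (c + 1))
        omega
  · simp only [glue]
    rw [if_neg (by omega), if_neg (by omega)]
    have := hq.2.2 (x - (c + 1)) (by omega)
    omega

def Psi (k : ℕ) : (Σ c : Fin (k + 1), BS c.val × BS (k - c.val)) → BS (k + 1) :=
  fun s => ⟨glue s.1.val s.2.1.1 s.2.2.1,
    glue_mem k s.1.val (by omega) _ _ s.2.1.2 s.2.2.2⟩

lemma Psi_bij (k : ℕ) : Function.Bijective (Psi k) := by
  constructor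
  · rintro ⟨⟨c, hck⟩, ⟨p, hp⟩, ⟨q, hq⟩⟩ ⟨⟨c', hck'⟩, ⟨p', hp'⟩, ⟨q', hq'⟩⟩ h
    replace hp : Bpred c p := hp
    replace hq : Bpred (k - c) q := hq
    replace hp' : Bpred c' p' := hp'
    replace hq' : Bpred (k - c') q' := hq'
    have hfun : ∀ x, glue c p q x = glue c' p' q' x := by
      intro x
      have := congrArg Subtype.val h
      simp only [Psi] at this
      exact congrFun this x
    -- value of glue at c+1 is c+1 ; below it is smaller
    have hval : ∀ (c₀ : ℕ) (p₀ q₀ : ℕ → ℕ), Bpred c₀ p₀ → Bpred (k - c₀) q₀ →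
        glue c₀ p₀ q₀ (c₀ + 1) = c₀ + 1 ∧ ∀ y < c₀, glue c₀ p₀ q₀ (y + 1) < y + 1 := by
      intro c₀ p₀ q₀ hp₀ hq₀
      constructor
      · simp only [glue]
        rw [if_neg (show ¬ c₀ + 1 = 0 by omega), if_neg (show ¬ c₀ + 1 ≤ c₀ by omega)]
        have := hq₀.2.1 0
        have h0 : c₀ + 1 - (c₀ + 1) = 0 := by omega
        rw [h0]
        omega
      · intro y hy
        simp only [glue]
        rw [if_neg (show ¬ y + 1 = 0 by omega), if_pos (show y + 1 ≤ c₀ by omega)]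
        have := hp₀.2.1 (y + 1 - 1)
        omega
    have hcc : c = c' := by
      rcases lt_trichotomy c c' with hlt | he | hlt
      · exfalso
        have h1 := (hval c p q hp hq).1
        have h2 := (hval c' p' q' hp' hq').2 c hlt
        rw [hfun (c + 1)] at h1
        omega
      · exact he
      · exfalso
        have h1 := (hval c' p' q' hp' hq').1
        have h2 := (hval c p q hp hq).2 c' hlt
        rw [← hfun (c' + 1)] at h1
        omega
    subst hcc
    have hpp : p = p' := by
      funext x
      by_cases hx : x < c
      · have := hfun (x + 1)
        simp only [glue] at this
        simp only [if_neg (show ¬ x + 1 = 0 by omega), if_pos (show x + 1 ≤ c by omega)] at this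
        have he : x + 1 - 1 = x := by omega
        rw [he] at this
        exact this
      · rw [hp.2.2 x (by omega), hp'.2.2 x (by omega)]
    have hqq : q = q' := by
      funext x
      have := hfun (x + c + 1)
      simp only [glue] at this
      simp only [if_neg (show ¬ x + c + 1 = 0 by omega),
        if_neg (show ¬ x + c + 1 ≤ c by omega)] at this
      have he : x + c + 1 - (c + 1) = x := by omega
      rw [he] at this
      omega
    subst hpp
    subst hqq
    rfl
  · rintro ⟨f, hf⟩
    have hEx : ∃ x, f (x + 1) = x + 1 := ⟨k, hf.2.2 (k + 1) le_rfl⟩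
    classical
    set c := Nat.find hEx with hcdef
    have hc : f (c + 1) = c + 1 := Nat.find_spec hEx
    have hcmin : ∀ y, y < c → f (y + 1) ≠ y + 1 := by
      intro y hy hcon
      have h2 : Nat.find hEx ≤ y := Nat.find_le (h := hEx) hcon
      omega
    have hck : c ≤ k := Nat.find_le (h := hEx) (hf.2.2 (k + 1) le_rfl)
    set p : ℕ → ℕ := fun x => if x < c then f (x + 1) else x with hpdef
    set q : ℕ → ℕ := fun x => f (x + (c + 1)) - (c + 1) with hqdef
    have hkey : ∀ x, c + 1 ≤ f (x + (c + 1)) := by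
      intro x
      have := hf.1 (show c + 1 ≤ x + (c + 1) by omega)
      omega
    have hp : Bpred c p := by
      refine ⟨monotone_nat_of_le_succ fun x => ?_, fun x => ?_, fun x hx => ?_⟩
      · show (if x < c then f (x + 1) else x) ≤ (if x + 1 < c then f (x + 1 + 1) else x + 1)
        by_cases h1 : x + 1 < c
        · rw [if_pos (by omega), if_pos h1]
          exact hf.1 (by omega)
        · by_cases h2 : x < c
          · rw [if_pos h2, if_neg h1]
            have := hf.2.1 (x + 1)
            omega
          · rw [if_neg h2, if_neg h1]
            omega
      · show (if x < c then f (x + 1) else x) ≤ x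
        by_cases h1 : x < c
        · rw [if_pos h1]
          have h2 := hf.2.1 (x + 1)
          have h3 := hcmin x h1
          omega
        · rw [if_neg h1]
      · show (if x < c then f (x + 1) else x) = x
        rw [if_neg (by omega)]
    have hq : Bpred (k - c) q := by
      refine ⟨monotone_nat_of_le_succ fun x => ?_, fun x => ?_, fun x hx => ?_⟩
      · show f (x + (c + 1)) - (c + 1) ≤ f (x + 1 + (c + 1)) - (c + 1)
        have := hf.1 (show x + (c + 1) ≤ x + 1 + (c + 1) by omega)
        omega
      · show f (x + (c + 1)) - (c + 1) ≤ x
        have := hf.2.1 (x + (c + 1))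
        omega
      · show f (x + (c + 1)) - (c + 1) = x
        have := hf.2.2 (x + (c + 1)) (by omega)
        omega
    refine ⟨⟨⟨c, by omega⟩, ⟨p, hp⟩, ⟨q, hq⟩⟩, ?_⟩
    apply Subtype.ext
    funext x
    show glue c p q x = f x
    simp only [glue]
    by_cases h0 : x = 0
    · subst h0
      rw [if_pos rfl]
      have := hf.2.1 0
      omega
    · rw [if_neg h0]
      by_cases h1 : x ≤ c
      · rw [if_pos h1]
        show (if x - 1 < c then f (x - 1 + 1) else x - 1) = f x
        rw [if_pos (by omega), show x - 1 + 1 = x by omega]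
      · rw [if_neg h1]
        show f (x - (c + 1) + (c + 1)) - (c + 1) + (c + 1) = f x
        rw [show x - (c + 1) + (c + 1) = x by omega]
        have := hkey (x - (c + 1))
        rw [show x - (c + 1) + (c + 1) = x by omega] at this
        omega

def BS_zero_equiv : BS 0 ≃ Unit where
  toFun _ := ()
  invFun _ := ⟨fun x => x, fun _ _ h => h, fun x => le_refl x, fun _ _ => rfl⟩
  left_inv F := by
    apply Subtype.ext
    funext x
    exact (F.2.2.2 x (Nat.zero_le x)).symm
  right_inv _ := rfl

lemma BS_card : ∀ m : ℕ, Finite (BS m) ∧ Nat.card (BS m) = catalan m := by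
  intro m
  induction m using Nat.strong_induction_on with
  | _ m ih =>
      match m with
      | 0 =>
          constructor
          · exact Finite.of_equiv _ BS_zero_equiv.symm
          · rw [Nat.card_congr BS_zero_equiv, Nat.card_unique, catalan_zero]
      | k + 1 =>
          haveI h1 : ∀ c : Fin (k + 1), Finite (BS c.val) :=
            fun c => (ih c.val (by omega)).1
          haveI h2 : ∀ c : Fin (k + 1), Finite (BS (k - c.val)) :=
            fun c => (ih (k - c.val) (by omega)).1
          have e : (Σ c : Fin (k + 1), BS c.val × BS (k - c.val)) ≃ BS (k + 1) :=
            Equiv.ofBijective _ (Psi_bij k)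
          constructor
          · exact Finite.of_equiv _ e
          · rw [← Nat.card_congr e]
            letI : ∀ c : Fin (k + 1), Fintype (BS c.val) := fun c => Fintype.ofFinite _
            letI : ∀ c : Fin (k + 1), Fintype (BS (k - c.val)) := fun c => Fintype.ofFinite _
            rw [Nat.card_eq_fintype_card, Fintype.card_sigma]
            have hterm : ∀ c : Fin (k + 1),
                Fintype.card (BS c.val × BS (k - c.val)) = catalan c.val * catalan (k - c.val) := by
              intro c
              rw [Fintype.card_prod, ← Nat.card_eq_fintype_card, ← Nat.card_eq_fintype_card,
                (ih c.val (by omega)).2, (ih (k - c.val) (by omega)).2]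
            rw [Finset.sum_congr rfl (fun c _ => hterm c), catalan_succ k]

theorem HK_card (n : ℕ) : Nat.card (HK (arrQn n)) = catalan (n + 1) := by
  have hbij : Function.Bijective
      (fun z : HK (arrQn n) => (⟨phi n z, phi_mem_B n z⟩ : BS (n + 1))) := by
    constructor
    · intro z z' h
      have hEq : phi n z = phi n z' := congrArg Subtype.val h
      obtain ⟨ν, hok, hw⟩ := complete n z
      obtain ⟨ν', hok', hw'⟩ := complete n z'
      have := sem_inj n ν.length ν ν' le_rfl hok hok' (by rw [hw, hw', hEq])
      rw [← hw, ← hw', this]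
    · rintro ⟨f, hf⟩
      obtain ⟨z, hz⟩ := phi_surj n f hf
      exact ⟨z, Subtype.ext hz⟩
  exact (Nat.card_eq_of_bijective _ hbij).trans (BS_card (n + 1)).2

end HKCat

/-- For every `n ≥ 1`, the cardinality of the Hecke–Kiselman monoid
of the linearly oriented type-`A` quiver `Q_n` is the `(n+1)`-st Catalan number. -/
theorem hk_card_catalan (n : ℕ) (hn : 1 ≤ n) :
    Nat.card (HK (arrQn n)) = catalan (n + 1) :=
  HKCat.HK_card n
end

section
/- Let T_m be the m-subspace quiver: the quiver with vertex set {0, 1, …, m} whose arrows are exactly i → 0 for 1 ≤ i ≤ m (so 0 is the unique sink and 1,…,m are sources). Then the cardinality of the Hecke–Kiselman monoid HK(T_m) equals 2^m + 3^m. -/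
/-- The arrow relation of the `m`-subspace quiver `T_m` with vertices `{0, 1, …, m}`
(modelled as `Fin (m+1)`): the arrows are exactly `i → 0` for `i ≠ 0`, so `0` is the
unique sink and `1, …, m` are sources. -/
def arrTm (m : ℕ) : Fin (m + 1) → Fin (m + 1) → Prop :=
  fun i j => i ≠ 0 ∧ j = 0


namespace HKProof

variable {V : Type} [DecidableEq V]

structure NF (V : Type) [DecidableEq V] where
  fst : Finset V
  snd : Option (Finset V)
  disj : ∀ b ∈ snd, Disjoint fst b

lemma NF.ext' {x y : NF V} (h1 : x.fst = y.fst) (h2 : x.snd = y.snd) : x = y := by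
  cases x; cases y; cases h1; cases h2; rfl

/-- `e A` : the class of the square-free word on the non-sink generators in `A`. -/
def NF.e (A : Finset V) : NF V := ⟨A, none, by simp⟩

/-- `f A B` : the class of the word `A · x₀ · B` (normalised). -/
def NF.f (A B : Finset V) : NF V := ⟨A, some (B \ A), by simp [Finset.sdiff_disjoint.symm]⟩

def NF.mul : NF V → NF V → NF V
  | ⟨A, none, _⟩, ⟨C, none, _⟩ => NF.e (A ∪ C)
  | ⟨A, none, _⟩, ⟨C, some D, _⟩ => NF.f (A ∪ C) D
  | ⟨A, some B, _⟩, ⟨C, none, _⟩ => NF.f A (B ∪ C)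
  | ⟨A, some B, _⟩, ⟨C, some D, _⟩ => NF.f (A ∪ B ∪ C) D

instance : Mul (NF V) := ⟨NF.mul⟩
instance : One (NF V) := ⟨NF.e ∅⟩

lemma NF.one_def : (1 : NF V) = NF.e ∅ := rfl

lemma NF.f_eq_f {A B A' B' : Finset V} (h1 : A = A') (h2 : B \ A = B' \ A') :
    NF.f A B = NF.f A' B' := NF.ext' h1 (by simp [NF.f, h2])

lemma NF.e_mul_e (A C : Finset V) : NF.e A * NF.e C = NF.e (A ∪ C) := rfl

lemma NF.e_mul_f (A C D : Finset V) : NF.e A * NF.f C D = NF.f (A ∪ C) D := by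
  show NF.mul _ _ = _
  simp only [NF.e, NF.f, NF.mul]
  refine NF.f_eq_f rfl ?_
  ext a; simp; try tauto

lemma NF.f_mul_e (A B C : Finset V) : NF.f A B * NF.e C = NF.f A (B ∪ C) := by
  show NF.mul _ _ = _
  simp only [NF.e, NF.f, NF.mul]
  refine NF.f_eq_f rfl ?_
  ext a; simp; try tauto

lemma NF.f_mul_f (A B C D : Finset V) : NF.f A B * NF.f C D = NF.f (A ∪ B ∪ C) D := by
  show NF.mul _ _ = _
  simp only [NF.e, NF.f, NF.mul]
  refine NF.f_eq_f ?_ ?_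
  · ext a; simp; try tauto
  · ext a; simp; try tauto

lemma NF.eq_e (A : Finset V) (h) : (⟨A, none, h⟩ : NF V) = NF.e A := NF.ext' rfl rfl

lemma NF.eq_f (A B : Finset V) (h) : (⟨A, some B, h⟩ : NF V) = NF.f A B := by
  refine NF.ext' rfl ?_
  have : Disjoint A B := h B rfl
  simp [NF.f, Finset.sdiff_eq_self_iff_disjoint.2 this.symm]

instance : Monoid (NF V) where
  mul_assoc x y z := by
    obtain ⟨A, _ | B, hx⟩ := x <;> obtain ⟨C, _ | D, hy⟩ := y <;> obtain ⟨E, _ | F, hz⟩ := z <;>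
      simp only [NF.eq_e, NF.eq_f, NF.e_mul_e, NF.e_mul_f, NF.f_mul_e, NF.f_mul_f] <;>
      first
      | rfl
      | (refine NF.f_eq_f ?_ ?_ <;> (ext a; simp; try tauto))
      | (congr 1; ext a; simp; try tauto)
  one_mul x := by
    obtain ⟨A, _ | B, hx⟩ := x <;>
      simp only [NF.eq_e, NF.eq_f, NF.one_def, NF.e_mul_e, NF.e_mul_f, Finset.empty_union]
  mul_one x := by
    obtain ⟨A, _ | B, hx⟩ := x <;>
      simp only [NF.eq_e, NF.eq_f, NF.one_def, NF.e_mul_e, NF.f_mul_e, Finset.union_empty]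

lemma NF.e_injective : Function.Injective (NF.e (V := V)) := by
  intro A B h
  simpa [NF.e] using congrArg NF.fst h

lemma NF.e_ne_f (A C D : Finset V) : NF.e A ≠ NF.f C D := by
  intro h
  simpa [NF.e, NF.f] using congrArg NF.snd h

lemma NF.f_inj {A B C D : Finset V} (hAB : Disjoint A B) (hCD : Disjoint C D)
    (h : NF.f A B = NF.f C D) : A = C ∧ B = D := by
  have h1 : A = C := congrArg NF.fst h
  have h2 : B \ A = D \ C := by simpa [NF.f] using congrArg NF.snd h
  rw [Finset.sdiff_eq_self_iff_disjoint.2 hAB.symm, Finset.sdiff_eq_self_iff_disjoint.2 hCD.symm] at h2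
  exact ⟨h1, h2⟩


/-! ### The HK side -/

section HKdefs

variable {W : Type} {arr : W → W → Prop}

lemma hk_rel_eq {a b : FreeMonoid W} (h : HKRel arr a b) :
    (HKCon arr).mk' a = (HKCon arr).mk' b := by
  simpa using (Con.eq (HKCon arr)).mpr (ConGen.Rel.of a b h)

lemma hk_x_idem (t : W) : HK.x arr t * HK.x arr t = HK.x arr t := by
  simpa [HK.x, map_mul] using hk_rel_eq (HKRel.idem (arr := arr) t)

lemma hk_x_braid (s t : W) :
    HK.x arr s * HK.x arr t * HK.x arr s = HK.x arr t * HK.x arr s * HK.x arr t := by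
  simpa [HK.x, map_mul] using hk_rel_eq (HKRel.braid (arr := arr) s t)

lemma hk_x_absorb {s t : W} (h : ¬ arr t s) :
    HK.x arr t * HK.x arr s * HK.x arr t = HK.x arr s * HK.x arr t := by
  simpa [HK.x, map_mul] using hk_rel_eq (HKRel.absorb (arr := arr) s t h)

end HKdefs

section Tm

variable {m : ℕ}

/-- `z` : the generator at the sink `0`. -/
def zg (m : ℕ) : HK (arrTm m) := HK.x (arrTm m) 0

/-- `y i` : the generator at the source `i+1`. -/
def yg (i : Fin m) : HK (arrTm m) := HK.x (arrTm m) i.succ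

lemma not_arr_to_succ (v : Fin (m+1)) (i : Fin m) : ¬ arrTm m v i.succ := by
  simp [arrTm, Fin.succ_ne_zero]

lemma not_arr_zero (v : Fin (m+1)) : ¬ arrTm m 0 v := by
  simp [arrTm]

lemma yy (i : Fin m) : yg i * yg i = yg i := hk_x_idem _

lemma zz : zg m * zg m = zg m := hk_x_idem _

lemma ycomm (i j : Fin m) : yg i * yg j = yg j * yg i := by
  have h1 : yg j * yg i * yg j = yg i * yg j := hk_x_absorb (not_arr_to_succ _ _)
  have h2 : yg i * yg j * yg i = yg j * yg i := hk_x_absorb (not_arr_to_succ _ _)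
  have h3 : yg i * yg j * yg i = yg j * yg i * yg j := hk_x_braid _ _
  rw [← h2, h3, h1]

lemma zyz (j : Fin m) : zg m * yg j * zg m = yg j * zg m :=
  hk_x_absorb (not_arr_zero _)

lemma yzy (j : Fin m) : yg j * zg m * yg j = yg j * zg m := by
  have h := hk_x_braid (arr := arrTm m) j.succ 0
  calc yg j * zg m * yg j = zg m * yg j * zg m := h
  _ = yg j * zg m := zyz j

/-- the product of the commuting idempotents `y i`, `i ∈ A`. -/
def Eg (A : Finset (Fin m)) : HK (arrTm m) :=
  A.noncommProd yg (fun a _ b _ _ => ycomm a b)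

lemma Eg_empty : Eg (∅ : Finset (Fin m)) = 1 := Finset.noncommProd_empty _ _

lemma Eg_insert_of_not_mem {j : Fin m} {A : Finset (Fin m)} (h : j ∉ A) :
    Eg (insert j A) = yg j * Eg A :=
  Finset.noncommProd_insert_of_notMem _ _ _ _ h

lemma ycommE (j : Fin m) (A : Finset (Fin m)) : Eg A * yg j = yg j * Eg A := by
  induction A using Finset.induction with
  | empty => simp [Eg_empty]
  | insert _ _ hnm ih =>
      rw [Eg_insert_of_not_mem hnm, mul_assoc, ih, ← mul_assoc, ycomm, mul_assoc]

lemma yE (j : Fin m) (A : Finset (Fin m)) : yg j * Eg A = Eg (insert j A) := by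
  by_cases h : j ∈ A
  · have hA : A = insert j (A.erase j) := (Finset.insert_erase h).symm
    rw [Finset.insert_eq_self.2 h]
    conv_lhs => rw [hA, Eg_insert_of_not_mem (Finset.notMem_erase _ _)]
    rw [← mul_assoc, yy, ← Eg_insert_of_not_mem (Finset.notMem_erase _ _), ← hA]
  · exact (Eg_insert_of_not_mem h).symm

lemma zyz' (j : Fin m) : zg m * (yg j * zg m) = yg j * zg m := by
  rw [← mul_assoc, zyz]

lemma zEz (A : Finset (Fin m)) : zg m * Eg A * zg m = Eg A * zg m := by
  induction A using Finset.induction with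
  | empty => simp [Eg_empty, zz]
  | @insert j A hnm ih =>
      have ih' : ∀ w, zg m * (Eg A * (zg m * w)) = Eg A * (zg m * w) := by
        intro w
        rw [← mul_assoc, ← mul_assoc, ih, mul_assoc]
      rw [Eg_insert_of_not_mem hnm, ← ycommE]
      calc zg m * (Eg A * yg j) * zg m
          = zg m * (Eg A * (yg j * zg m)) := by simp only [mul_assoc]
        _ = zg m * (Eg A * (zg m * (yg j * zg m))) := by rw [zyz']
        _ = Eg A * (zg m * (yg j * zg m)) := ih' _
        _ = Eg A * (yg j * zg m) := by rw [zyz']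
        _ = Eg A * yg j * zg m := (mul_assoc _ _ _).symm


/-! ### Right-associated helper lemmas -/

lemma ycommE' (j : Fin m) (A : Finset (Fin m)) (w : HK (arrTm m)) :
    Eg A * (yg j * w) = yg j * (Eg A * w) := by
  rw [← mul_assoc, ycommE, mul_assoc]

lemma yzy' (j : Fin m) (w : HK (arrTm m)) :
    yg j * (zg m * (yg j * w)) = yg j * (zg m * w) := by
  rw [← mul_assoc, ← mul_assoc, yzy, mul_assoc]

lemma zEz' (A : Finset (Fin m)) (w : HK (arrTm m)) :
    zg m * (Eg A * (zg m * w)) = Eg A * (zg m * w) := by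
  rw [← mul_assoc, ← mul_assoc, zEz, mul_assoc]

/-! ### The index type and the normal-form map -/

abbrev Idx (m : ℕ) : Type :=
  Finset (Fin m) ⊕ {p : Finset (Fin m) × Finset (Fin m) // Disjoint p.1 p.2}

def psi : Idx m → HK (arrTm m)
  | .inl A => Eg A
  | .inr p => Eg p.1.1 * (zg m * Eg p.1.2)

lemma psi_surj : Function.Surjective (psi (m := m)) := by
  intro q
  induction q using Con.induction_on with
  | _ w =>
  induction w using FreeMonoid.recOn with
  | one =>
      refine ⟨.inl ∅, ?_⟩
      simp [psi, Eg_empty]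
  | of_mul v w ihw =>
      obtain ⟨i, hi⟩ := ihw
      have hv : ((FreeMonoid.of v * w : FreeMonoid (Fin (m+1))) : HK (arrTm m))
          = HK.x (arrTm m) v * (w : HK (arrTm m)) := rfl
      rw [hv, ← hi]
      clear hi hv
      induction v using Fin.cases with
      | zero =>
          show ∃ i', psi i' = zg m * psi i
          match i with
          | .inl A =>
              refine ⟨.inr ⟨(∅, A), Finset.disjoint_empty_left _⟩, ?_⟩
              simp [psi, Eg_empty]
          | .inr p =>
              refine ⟨.inr p, ?_⟩
              simp only [psi]
              rw [zEz']
      | succ j =>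
          show ∃ i', psi i' = yg j * psi i
          match i with
          | .inl A =>
              exact ⟨.inl (insert j A), by simp only [psi]; rw [yE]⟩
          | .inr ⟨(A, B), hd⟩ =>
              by_cases hjB : j ∈ B
              · refine ⟨.inr ⟨(insert j A, B.erase j), ?_⟩, ?_⟩
                · exact Finset.disjoint_insert_left.2
                    ⟨Finset.notMem_erase _ _, hd.mono_right (Finset.erase_subset _ _)⟩
                · simp only [psi]
                  have hB : B = insert j (B.erase j) := (Finset.insert_erase hjB).symm
                  conv_rhs => rw [hB, Eg_insert_of_not_mem (Finset.notMem_erase _ _)]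
                  rw [← yE, mul_assoc]
                  conv_rhs => rw [← ycommE', yzy', ycommE']
              · refine ⟨.inr ⟨(insert j A, B), Finset.disjoint_insert_left.2 ⟨hjB, hd⟩⟩, ?_⟩
                simp only [psi]
                rw [← yE, mul_assoc]

/-! ### The homomorphism to the normal-form monoid -/

def gen (m : ℕ) : Fin (m+1) → NF (Fin (m+1)) := fun v =>
  if v = 0 then NF.f ∅ ∅ else NF.e {v}

lemma gen_rel : HKCon (arrTm m) ≤ Con.ker (FreeMonoid.lift (gen m)) := by
  unfold HKCon
  apply Con.conGen_le.2
  rintro a b h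
  rw [Con.ker_rel]
  induction h with
  | idem t =>
      simp only [map_mul, FreeMonoid.lift_eval_of, gen]
      by_cases ht : t = 0 <;>
        simp [ht, NF.f_mul_f, NF.e_mul_e]
  | braid s t =>
      simp only [map_mul, FreeMonoid.lift_eval_of, gen]
      by_cases hs : s = 0 <;> by_cases ht : t = 0 <;>
        simp [hs, ht, NF.f_mul_f, NF.e_mul_e, NF.e_mul_f, NF.f_mul_e]
      · refine NF.f_eq_f rfl (by simp)
      · refine NF.f_eq_f rfl (by simp)
      · congr 1
        ext a; simp; tauto
  | absorb s t hts =>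
      simp only [map_mul, FreeMonoid.lift_eval_of, gen]
      by_cases ht : t = 0
      · by_cases hs : s = 0 <;>
          simp [hs, ht, NF.f_mul_f, NF.e_mul_e, NF.e_mul_f, NF.f_mul_e]
      · have hs : s ≠ 0 := fun h0 => hts ⟨ht, h0⟩
        simp [hs, ht, NF.e_mul_e]

def phi (m : ℕ) : HK (arrTm m) →* NF (Fin (m+1)) :=
  Con.lift _ (FreeMonoid.lift (gen m)) gen_rel

lemma phi_x (v : Fin (m+1)) : phi m (HK.x (arrTm m) v) = gen m v := by
  simp [phi, HK.x, Con.lift_mk', FreeMonoid.lift_eval_of]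

lemma phi_z : phi m (zg m) = NF.f ∅ ∅ := by
  rw [zg, phi_x]; simp [gen]

lemma phi_y (i : Fin m) : phi m (yg i) = NF.e {i.succ} := by
  rw [yg, phi_x]; simp [gen, Fin.succ_ne_zero]

def emb (m : ℕ) : Fin m ↪ Fin (m+1) := ⟨Fin.succ, Fin.succ_injective m⟩

lemma phi_E (A : Finset (Fin m)) : phi m (Eg A) = NF.e (A.map (emb m)) := by
  induction A using Finset.induction with
  | empty => simp [Eg_empty, NF.one_def]
  | @insert j A hnm ih =>
      rw [Eg_insert_of_not_mem hnm, map_mul, phi_y, ih, NF.e_mul_e, Finset.map_insert,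
        Finset.insert_eq]
      rfl

lemma phi_psi_inl (A : Finset (Fin m)) :
    phi m (psi (.inl A)) = NF.e (A.map (emb m)) := phi_E A

lemma phi_psi_inr (p : {p : Finset (Fin m) × Finset (Fin m) // Disjoint p.1 p.2}) :
    phi m (psi (.inr p)) = NF.f (p.1.1.map (emb m)) (p.1.2.map (emb m)) := by
  simp only [psi, map_mul, phi_E, phi_z]
  rw [NF.f_mul_e, NF.e_mul_f]
  simp

lemma psi_inj : Function.Injective (psi (m := m)) := by
  intro i1 i2 h
  have h' := congrArg (phi m) h
  match i1, i2 with
  | .inl A, .inl B =>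
      rw [phi_psi_inl, phi_psi_inl] at h'
      exact congrArg _ (Finset.map_injective (emb m) (NF.e_injective h'))
  | .inl A, .inr p =>
      rw [phi_psi_inl, phi_psi_inr] at h'
      exact absurd h' (NF.e_ne_f _ _ _)
  | .inr p, .inl A =>
      rw [phi_psi_inl, phi_psi_inr] at h'
      exact absurd h'.symm (NF.e_ne_f _ _ _)
  | .inr p, .inr q =>
      rw [phi_psi_inr, phi_psi_inr] at h'
      have hp : Disjoint (p.1.1.map (emb m)) (p.1.2.map (emb m)) :=
        (Finset.disjoint_map (emb m)).2 p.2
      have hq : Disjoint (q.1.1.map (emb m)) (q.1.2.map (emb m)) :=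
        (Finset.disjoint_map (emb m)).2 q.2
      obtain ⟨h1, h2⟩ := NF.f_inj hp hq h'
      have e1 := Finset.map_injective (emb m) h1
      have e2 := Finset.map_injective (emb m) h2
      congr 1
      exact Subtype.ext (Prod.ext e1 e2)

/-! ### Counting -/

def pairEquiv (m : ℕ) :
    {p : Finset (Fin m) × Finset (Fin m) // Disjoint p.1 p.2} ≃ (Fin m → Fin 3) where
  toFun p i := if i ∈ p.1.1 then 0 else if i ∈ p.1.2 then 1 else 2
  invFun f := ⟨(Finset.univ.filter (fun i => f i = 0), Finset.univ.filter (fun i => f i = 1)), by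
    rw [Finset.disjoint_left]
    intro a ha hb
    simp only [Finset.mem_filter, Finset.mem_univ, true_and] at ha hb
    rw [ha] at hb
    exact absurd hb (by decide)⟩
  left_inv := by
    rintro ⟨⟨A, B⟩, hd⟩
    have hAB := Finset.disjoint_left.mp hd
    apply Subtype.ext
    apply Prod.ext <;> ext a <;>
      simp only [Finset.mem_filter, Finset.mem_univ, true_and]
    · constructor
      · intro h
        by_contra hA
        rw [if_neg hA] at h
        split_ifs at h <;> exact absurd h (by decide)
      · intro h; rw [if_pos h]
    · constructor
      · intro h
        by_contra hB
        by_cases hA : a ∈ A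
        · rw [if_pos hA] at h; exact absurd h (by decide)
        · rw [if_neg hA, if_neg hB] at h; exact absurd h (by decide)
      · intro h
        rw [if_neg (fun hA => hAB hA h), if_pos h]
  right_inv := by
    intro f
    funext i
    simp only [Finset.mem_filter, Finset.mem_univ, true_and]
    split_ifs with h1 h2
    · exact h1.symm
    · exact h2.symm
    · have : ∀ x : Fin 3, x ≠ 0 → x ≠ 1 → x = 2 := by decide
      exact (this _ h1 h2).symm

lemma card_idx : Nat.card (Idx m) = 2 ^ m + 3 ^ m := by
  rw [Nat.card_sum]
  congr 1
  · simp [Nat.card_eq_fintype_card, Fintype.card_finset]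
  · rw [Nat.card_congr (pairEquiv m), Nat.card_eq_fintype_card, Fintype.card_fun]
    simp

lemma hk_card : Nat.card (HK (arrTm m)) = 2 ^ m + 3 ^ m := by
  rw [← Nat.card_eq_of_bijective psi ⟨psi_inj, psi_surj⟩, card_idx]

end Tm

end HKProof

/-- The cardinality of the Hecke–Kiselman monoid of the
`m`-subspace quiver `T_m` equals `2^m + 3^m`. -/
theorem hk_card_subspace_quiver (m : ℕ) :
    Nat.card (HK (arrTm m)) = 2 ^ m + 3 ^ m := HKProof.hk_card
end
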